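/- arXiv:2209.04276 — 9 statements merged into one kernel-verified Lean document; each statement's English description precedes it below -/
import Mathlib

section
/- Let C ≥ 1 and n ≥ 1 be integers and let h = ⌈n/2⌉. Then Σ_{w : {1,…,n} → {1,…,C}} #{i ∈ {1,…,h} : val(w,i) = ⌊i/C⌋ + 1} = Σ_{i=1}^{h} Σ_{m=1}^{C} Σ_{T+S=⌊i/C⌋, T,S ≥ 0} [ binom(i−1, T) · m^T · (C−m)^{i−1−T} ] · [ binom(n−i, S) · (m−1)^S · (C−m+1)^{n−i−S} ], where 0^0 = 1. -/
open Finset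

/-- The card value at (1-based) position `i.val + 1` of the word `w : Fin n → Fin C`,
where the value `w j` encodes the pile (increasing sequence) number `(w j).val + 1 ∈ {1, …, C}`:
`val(w,i) = 1 + #{j < i : w(j) ≤ w(i)} + #{j > i : w(j) < w(i)}`. -/
def pileVal (n C : ℕ) (w : Fin n → Fin C) (i : Fin n) : ℕ :=
  1 + (Finset.univ.filter (fun j : Fin n => j < i ∧ w j ≤ w i)).card
    + (Finset.univ.filter (fun j : Fin n => i < j ∧ w j < w i)).card


lemma prod_ite_mem_card {α M : Type*} [CommMonoid M] [DecidableEq α] {s t : Finset α} (hts : t ⊆ s)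
    (a b : M) : (∏ j ∈ s, if j ∈ t then a else b) = a ^ t.card * b ^ (s.card - t.card) := by
  rw [Finset.prod_ite, Finset.prod_const, Finset.prod_const]
  congr 1
  · congr 1
    rw [Finset.filter_mem_eq_inter, Finset.inter_comm, Finset.inter_eq_left.2 hts]
  · congr 1
    rw [Finset.filter_not, Finset.filter_mem_eq_inter, Finset.inter_comm,
      Finset.inter_eq_left.2 hts, Finset.card_sdiff_of_subset hts]

lemma fiber_count (C n : ℕ) (i : Fin n) (v : Fin C) (tL tR : Finset (Fin n))
    (hL : tL ⊆ univ.filter (· < i)) (hR : tR ⊆ univ.filter (i < ·)) :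
    (univ.filter fun w : Fin n → Fin C => w i = v ∧
      (univ.filter fun j => j < i ∧ w j ≤ w i) = tL ∧
      (univ.filter fun j => i < j ∧ w j < w i) = tR).card
    = ((v.val+1) ^ tL.card * (C - (v.val+1)) ^ (i.val - tL.card)) *
      (v.val ^ tR.card * (C - v.val) ^ (n - 1 - i.val - tR.card)) := by
  classical
  set G : Fin n → Finset (Fin C) := fun j =>
    if j = i then {v}
    else if j < i then (if j ∈ tL then univ.filter (· ≤ v) else univ.filter (fun x => ¬ x ≤ v))
    else (if j ∈ tR then univ.filter (· < v) else univ.filter (fun x => ¬ x < v)) with hG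
  have hset : (univ.filter fun w : Fin n → Fin C => w i = v ∧
      (univ.filter fun j => j < i ∧ w j ≤ w i) = tL ∧
      (univ.filter fun j => i < j ∧ w j < w i) = tR) = Fintype.piFinset G := by
    ext w
    simp only [Finset.mem_filter, Finset.mem_univ, true_and, Fintype.mem_piFinset]
    constructor
    · rintro ⟨hwi, hA, hB⟩ j
      simp only [hG]
      by_cases hji : j = i
      · rw [if_pos hji, hji, hwi]; exact Finset.mem_singleton_self v
      rw [if_neg hji]
      by_cases hlt : j < i
      · rw [if_pos hlt]
        have hmem : j ∈ tL ↔ w j ≤ v := by rw [← hA]; simp [hlt, hwi]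
        by_cases htl : j ∈ tL
        · rw [if_pos htl, Finset.mem_filter]; exact ⟨mem_univ _, hmem.1 htl⟩
        · rw [if_neg htl, Finset.mem_filter]
          exact ⟨mem_univ _, fun hc => htl (hmem.2 hc)⟩
      · rw [if_neg hlt]
        have hgt : i < j := lt_of_le_of_ne (not_lt.1 hlt) (fun e => hji e.symm)
        have hmem : j ∈ tR ↔ w j < v := by rw [← hB]; simp [hgt, hwi]
        by_cases htr : j ∈ tR
        · rw [if_pos htr, Finset.mem_filter]; exact ⟨mem_univ _, hmem.1 htr⟩
        · rw [if_neg htr, Finset.mem_filter]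
          exact ⟨mem_univ _, fun hc => htr (hmem.2 hc)⟩
    · intro hj
      have hwi : w i = v := by
        have := hj i; simp only [hG, if_pos rfl] at this; exact Finset.mem_singleton.1 this
      refine ⟨hwi, ?_, ?_⟩
      · ext j
        simp only [Finset.mem_filter, Finset.mem_univ, true_and, hwi]
        constructor
        · rintro ⟨hlt, hle⟩
          have hji : j ≠ i := ne_of_lt hlt
          have hx := hj j
          simp only [hG, if_neg hji, if_pos hlt] at hx
          by_contra htl
          rw [if_neg htl, Finset.mem_filter] at hx
          exact hx.2 hle
        · intro htl
          have hlt : j < i := by have := hL htl; simpa using this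
          have hji : j ≠ i := ne_of_lt hlt
          have hx := hj j
          simp only [hG, if_neg hji, if_pos hlt, if_pos htl] at hx
          rw [Finset.mem_filter] at hx
          exact ⟨hlt, hx.2⟩
      · ext j
        simp only [Finset.mem_filter, Finset.mem_univ, true_and, hwi]
        constructor
        · rintro ⟨hgt, hle⟩
          have hji : j ≠ i := ne_of_gt hgt
          have hlt : ¬ j < i := not_lt.2 (le_of_lt hgt)
          have hx := hj j
          simp only [hG, if_neg hji, if_neg hlt] at hx
          by_contra htr
          rw [if_neg htr, Finset.mem_filter] at hx
          exact hx.2 hle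
        · intro htr
          have hgt : i < j := by have := hR htr; simpa using this
          have hji : j ≠ i := ne_of_gt hgt
          have hlt : ¬ j < i := not_lt.2 (le_of_lt hgt)
          have hx := hj j
          simp only [hG, if_neg hji, if_neg hlt, if_pos htr] at hx
          rw [Finset.mem_filter] at hx
          exact ⟨hgt, hx.2⟩
  rw [hset, Fintype.card_piFinset]
  have hIic : (univ.filter (fun x : Fin C => x ≤ v)).card = v.val + 1 := by
    have : (univ.filter (fun x : Fin C => x ≤ v)) = Finset.Iic v := by ext x; simp
    rw [this, Fin.card_Iic]
  have hIio : (univ.filter (fun x : Fin C => x < v)).card = v.val := by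
    have : (univ.filter (fun x : Fin C => x < v)) = Finset.Iio v := by ext x; simp
    rw [this, Fin.card_Iio]
  have hnIic : (univ.filter (fun x : Fin C => ¬ x ≤ v)).card = C - (v.val + 1) := by
    rw [Finset.filter_not, Finset.card_sdiff_of_subset (Finset.filter_subset _ _), hIic,
      Finset.card_univ, Fintype.card_fin]
  have hnIio : (univ.filter (fun x : Fin C => ¬ x < v)).card = C - v.val := by
    rw [Finset.filter_not, Finset.card_sdiff_of_subset (Finset.filter_subset _ _), hIio,
      Finset.card_univ, Fintype.card_fin]
  have hi_mem : i ∈ (univ : Finset (Fin n)) := mem_univ i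
  rw [← Finset.mul_prod_erase _ _ hi_mem]
  have hGi : (G i).card = 1 := by simp [hG]
  rw [hGi, one_mul, ← Finset.prod_filter_mul_prod_filter_not (univ.erase i) (· < i)]
  have heL : (univ.erase i).filter (· < i) = univ.filter (· < i) := by
    ext j; simp only [Finset.mem_filter, Finset.mem_erase, Finset.mem_univ, true_and]
    exact ⟨fun ⟨_, h2⟩ => h2, fun h2 => ⟨⟨ne_of_lt h2, trivial⟩, h2⟩⟩
  have heR : (univ.erase i).filter (fun j => ¬ j < i) = univ.filter (i < ·) := by
    ext j; simp only [Finset.mem_filter, Finset.mem_erase, Finset.mem_univ, true_and]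
    constructor
    · rintro ⟨⟨hne, _⟩, hnlt⟩; exact lt_of_le_of_ne (not_lt.1 hnlt) (fun e => hne e.symm)
    · intro hgt; exact ⟨⟨ne_of_gt hgt, trivial⟩, not_lt.2 (le_of_lt hgt)⟩
  rw [heL, heR]
  have hcardL : (univ.filter (· < i : Fin n → Prop)).card = i.val := by
    have : (univ.filter (· < i : Fin n → Prop)) = Finset.Iio i := by ext x; simp
    rw [this, Fin.card_Iio]
  have hcardR : (univ.filter (i < · : Fin n → Prop)).card = n - 1 - i.val := by
    have : (univ.filter (i < · : Fin n → Prop)) = Finset.Ioi i := by ext x; simp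
    rw [this, Fin.card_Ioi]
  have hprodL : ∏ j ∈ univ.filter (· < i : Fin n → Prop), (G j).card
      = (v.val+1) ^ tL.card * (C - (v.val+1)) ^ (i.val - tL.card) := by
    rw [show ∏ j ∈ univ.filter (· < i : Fin n → Prop), (G j).card
        = ∏ j ∈ univ.filter (· < i : Fin n → Prop), (if j ∈ tL then v.val + 1 else C - (v.val+1)) from ?_,
      prod_ite_mem_card hL, hcardL]
    refine Finset.prod_congr rfl fun j hj => ?_
    have hlt : j < i := by simpa using hj
    have hji : j ≠ i := ne_of_lt hlt
    simp only [hG, if_neg hji, if_pos hlt]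
    by_cases htl : j ∈ tL
    · rw [if_pos htl, if_pos htl, hIic]
    · rw [if_neg htl, if_neg htl, hnIic]
  have hprodR : ∏ j ∈ univ.filter (i < · : Fin n → Prop), (G j).card
      = v.val ^ tR.card * (C - v.val) ^ (n - 1 - i.val - tR.card) := by
    rw [show ∏ j ∈ univ.filter (i < · : Fin n → Prop), (G j).card
        = ∏ j ∈ univ.filter (i < · : Fin n → Prop), (if j ∈ tR then v.val else C - v.val) from ?_,
      prod_ite_mem_card hR, hcardR]
    refine Finset.prod_congr rfl fun j hj => ?_
    have hgt : i < j := by simpa using hj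
    have hji : j ≠ i := ne_of_gt hgt
    have hnlt : ¬ j < i := not_lt.2 (le_of_lt hgt)
    simp only [hG, if_neg hji, if_neg hnlt]
    by_cases htr : j ∈ tR
    · rw [if_pos htr, if_pos htr, hIio]
    · rw [if_neg htr, if_neg htr, hnIio]
  rw [hprodL, hprodR]

lemma count_fixed (C n : ℕ) (i : Fin n) (v : Fin C) (T S : ℕ) :
    (univ.filter fun w : Fin n → Fin C => w i = v ∧
      (univ.filter fun j => j < i ∧ w j ≤ w i).card = T ∧
      (univ.filter fun j => i < j ∧ w j < w i).card = S).card
    = (Nat.choose i.val T * (v.val+1) ^ T * (C - (v.val+1)) ^ (i.val - T)) *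
      (Nat.choose (n - 1 - i.val) S * v.val ^ S * (C - v.val) ^ (n - 1 - i.val - S)) := by
  classical
  rw [Finset.card_eq_sum_card_fiberwise (f := fun w : Fin n → Fin C =>
      ((univ.filter fun j => j < i ∧ w j ≤ w i), (univ.filter fun j => i < j ∧ w j < w i)))
      (t := (powersetCard T (univ.filter (· < i))) ×ˢ (powersetCard S (univ.filter (i < ·))))
      (fun w hw => by
        simp only [Finset.mem_coe, Finset.mem_filter, Finset.mem_univ, true_and] at hw
        simp only [Finset.mem_coe, Finset.mem_product, Finset.mem_powersetCard]
        exact ⟨⟨fun j hj => by simp only [Finset.mem_filter] at *; exact ⟨mem_univ _, hj.2.1⟩, hw.2.1⟩,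
               ⟨fun j hj => by simp only [Finset.mem_filter] at *; exact ⟨mem_univ _, hj.2.1⟩, hw.2.2⟩⟩)]
  rw [Finset.sum_product]
  have key : ∀ tL ∈ powersetCard T (univ.filter (· < i : Fin n → Prop)),
      ∀ tR ∈ powersetCard S (univ.filter (i < · : Fin n → Prop)),
      (Finset.filter (fun w : Fin n → Fin C =>
        ((univ.filter fun j => j < i ∧ w j ≤ w i), (univ.filter fun j => i < j ∧ w j < w i)) = (tL, tR))
        (univ.filter fun w => w i = v ∧
          (univ.filter fun j => j < i ∧ w j ≤ w i).card = T ∧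
          (univ.filter fun j => i < j ∧ w j < w i).card = S)).card
      = ((v.val+1) ^ T * (C - (v.val+1)) ^ (i.val - T)) *
        (v.val ^ S * (C - v.val) ^ (n - 1 - i.val - S)) := by
    intro tL htL tR htR
    rw [Finset.mem_powersetCard] at htL htR
    have hfe : (Finset.filter (fun w : Fin n → Fin C =>
        ((univ.filter fun j => j < i ∧ w j ≤ w i), (univ.filter fun j => i < j ∧ w j < w i)) = (tL, tR))
        (univ.filter fun w => w i = v ∧
          (univ.filter fun j => j < i ∧ w j ≤ w i).card = T ∧
          (univ.filter fun j => i < j ∧ w j < w i).card = S))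
        = (univ.filter fun w : Fin n → Fin C => w i = v ∧
          (univ.filter fun j => j < i ∧ w j ≤ w i) = tL ∧
          (univ.filter fun j => i < j ∧ w j < w i) = tR) := by
      ext w
      simp only [Finset.mem_filter, Finset.mem_univ, true_and, Prod.mk.injEq]
      constructor
      · rintro ⟨⟨h1, _, _⟩, h4, h5⟩; exact ⟨h1, h4, h5⟩
      · rintro ⟨h1, h4, h5⟩
        exact ⟨⟨h1, by rw [h4, htL.2], by rw [h5, htR.2]⟩, h4, h5⟩
    rw [hfe, fiber_count C n i v tL tR htL.1 htR.1, htL.2, htR.2]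
  rw [Finset.sum_congr rfl (fun tL htL => Finset.sum_congr rfl (fun tR htR => key tL htL tR htR))]
  simp only [Finset.sum_const, Finset.card_powersetCard, smul_eq_mul]
  have h1 : (univ.filter (· < i : Fin n → Prop)).card = i.val := by
    have : (univ.filter (· < i : Fin n → Prop)) = Finset.Iio i := by ext x; simp
    rw [this, Fin.card_Iio]
  have h2 : (univ.filter (i < · : Fin n → Prop)).card = n - 1 - i.val := by
    have : (univ.filter (i < · : Fin n → Prop)) = Finset.Ioi i := by ext x; simp
    rw [this, Fin.card_Ioi]
  rw [h1, h2]; ring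

lemma key_count (C n : ℕ) (i : Fin n) (k : ℕ) :
    (univ.filter fun w : Fin n → Fin C => pileVal n C w i = k + 1).card
    = ∑ m ∈ Finset.Icc 1 C, ∑ p ∈ Finset.HasAntidiagonal.antidiagonal k,
        (Nat.choose i.val p.1 * m ^ p.1 * (C - m) ^ (i.val - p.1)) *
        (Nat.choose (n - 1 - i.val) p.2 * (m - 1) ^ p.2 * (C - m + 1) ^ (n - 1 - i.val - p.2)) := by
  classical
  rw [Finset.card_eq_sum_card_fiberwise (f := fun w : Fin n → Fin C =>
      (w i, ((univ.filter fun j => j < i ∧ w j ≤ w i).card,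
             (univ.filter fun j => i < j ∧ w j < w i).card)))
      (t := (univ : Finset (Fin C)) ×ˢ Finset.HasAntidiagonal.antidiagonal k) (fun w hw => by
        replace hw := (Finset.mem_filter.1 hw).2
        simp only [Finset.mem_coe, Finset.mem_filter, Finset.mem_univ, true_and, pileVal, Set.mem_setOf_eq] at hw
        simp only [Finset.mem_coe, Finset.mem_product, Finset.mem_univ, Finset.HasAntidiagonal.mem_antidiagonal, true_and]
        omega)]
  rw [Finset.sum_product]
  have hfib : ∀ (v : Fin C), ∀ p ∈ Finset.HasAntidiagonal.antidiagonal k,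
      (Finset.filter (fun w : Fin n → Fin C =>
        (w i, ((univ.filter fun j => j < i ∧ w j ≤ w i).card,
               (univ.filter fun j => i < j ∧ w j < w i).card)) = (v, p))
        (univ.filter fun w => pileVal n C w i = k + 1)).card
      = (Nat.choose i.val p.1 * (v.val+1) ^ p.1 * (C - (v.val+1)) ^ (i.val - p.1)) *
        (Nat.choose (n - 1 - i.val) p.2 * v.val ^ p.2 * (C - v.val) ^ (n - 1 - i.val - p.2)) := by
    intro v p hp
    rw [Finset.HasAntidiagonal.mem_antidiagonal] at hp
    have hfe : (Finset.filter (fun w : Fin n → Fin C =>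
        (w i, ((univ.filter fun j => j < i ∧ w j ≤ w i).card,
               (univ.filter fun j => i < j ∧ w j < w i).card)) = (v, p))
        (univ.filter fun w => pileVal n C w i = k + 1))
        = (univ.filter fun w : Fin n → Fin C => w i = v ∧
            (univ.filter fun j => j < i ∧ w j ≤ w i).card = p.1 ∧
            (univ.filter fun j => i < j ∧ w j < w i).card = p.2) := by
      ext w
      simp only [Finset.mem_filter, Finset.mem_univ, true_and, Prod.mk.injEq, pileVal,
        Prod.ext_iff, Set.mem_setOf_eq]
      constructor
      · rintro ⟨_, h1, h2, h3⟩; exact ⟨h1, h2, h3⟩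
      · rintro ⟨h1, h2, h3⟩; exact ⟨Finset.mem_filter.2 ⟨Finset.mem_univ _, by omega⟩, h1, h2, h3⟩
    rw [hfe, count_fixed]
  rw [Finset.sum_congr rfl (fun v _ => Finset.sum_congr rfl (fun p hp => hfib v p hp))]
  refine Finset.sum_bij' (fun (v : Fin C) _ => v.val + 1)
    (fun m hm => ⟨m - 1, by simp only [Finset.mem_Icc] at hm; omega⟩)
    (fun v _ => by simp [Finset.mem_Icc]) (fun m hm => Finset.mem_univ _)
    (fun v _ => by simp) (fun m hm => by simp only [Finset.mem_Icc] at hm; show m - 1 + 1 = m; omega)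
    (fun v _ => ?_)
  beta_reduce
  refine Finset.sum_congr rfl (fun p _ => ?_)
  have hv : v.val < C := v.isLt
  have e1 : v.val + 1 - 1 = v.val := by omega
  have e2 : C - (v.val + 1) + 1 = C - v.val := by omega
  rw [e1, e2]


theorem first_moment_top_half_C_sequences
    (C n : ℕ) (hC : 1 ≤ C) (hn : 1 ≤ n) (h : ℕ) (hh : h = (n + 1) / 2) :
    (∑ w : Fin n → Fin C,
      (Finset.univ.filter (fun i : Fin n =>
        i.val + 1 ≤ h ∧ pileVal n C w i = (i.val + 1) / C + 1)).card) =
    ∑ i ∈ Finset.Icc 1 h, ∑ m ∈ Finset.Icc 1 C,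
      ∑ p ∈ Finset.HasAntidiagonal.antidiagonal (i / C),
        (Nat.choose (i - 1) p.1 * m ^ p.1 * (C - m) ^ (i - 1 - p.1)) *
          (Nat.choose (n - i) p.2 * (m - 1) ^ p.2 * (C - m + 1) ^ (n - i - p.2)) := by
  classical
  set F : ℕ → ℕ := fun i => ∑ m ∈ Finset.Icc 1 C, ∑ p ∈ Finset.HasAntidiagonal.antidiagonal (i / C),
    (Nat.choose (i - 1) p.1 * m ^ p.1 * (C - m) ^ (i - 1 - p.1)) *
    (Nat.choose (n - i) p.2 * (m - 1) ^ p.2 * (C - m + 1) ^ (n - i - p.2)) with hF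
  have step1 : (∑ w : Fin n → Fin C, (Finset.univ.filter (fun i : Fin n =>
        i.val + 1 ≤ h ∧ pileVal n C w i = (i.val + 1) / C + 1)).card)
      = ∑ i : Fin n, (if i.val + 1 ≤ h then F (i.val + 1) else 0) := by
    simp only [Finset.card_filter]
    rw [Finset.sum_comm]
    refine Finset.sum_congr rfl fun i _ => ?_
    by_cases hi : i.val + 1 ≤ h
    · simp only [hi, true_and, if_true]
      rw [← Finset.card_filter, key_count C n i ((i.val + 1) / C), hF]
      have e1 : n - (i.val + 1) = n - 1 - i.val := by omega
      simp only [Nat.add_sub_cancel, e1]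
    · simp only [hi, false_and, if_false]
      simp
  rw [step1, Fin.sum_univ_eq_sum_range (fun j => if j + 1 ≤ h then F (j + 1) else 0) n]
  have hhn : h ≤ n := by omega
  rw [← Finset.sum_subset (Finset.range_subset_range.2 hhn) (fun x hx hnx => by
      simp only [Finset.mem_range] at hx hnx; rw [if_neg]; omega)]
  rw [show Finset.Icc 1 h = Finset.Ico 1 (h+1) from rfl,
    Finset.sum_Ico_eq_sum_range]
  simp only [Nat.add_sub_cancel]
  refine Finset.sum_congr rfl fun j hj => ?_
  rw [Finset.mem_range] at hj
  rw [if_pos (by omega), Nat.add_comm 1 j]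
end

section
/- Let a₁, a₂ ≥ 1 and s ≥ 1 be integers and let c = ⌊(a₁+a₂)/2⌋ + 1. Then the polynomial G satisfies the recurrence G(a₁, a₂, s) = q^{δ(c, a₁)} · G(a₁−1, a₂, s) + q^{δ(c, s+a₂−1)} · G(a₁, a₂−1, s), where δ(x,y) = 1 if x = y and 0 otherwise. -/
open Finset

/-- The card value at position `i` determined by the set `A` (positions of the first
sequence) and the starting value `s` of the second sequence:
`v(A,i) = #{j ≤ i : j ∈ A}` if `i ∈ A` and `v(A,i) = (s−1) + #{j ≤ i : j ∉ A}` otherwise. -/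
def halfVal (s : ℕ) (A : Finset ℕ) (i : ℕ) : ℕ :=
  if i ∈ A then ((Finset.Icc 1 i).filter (fun j => j ∈ A)).card
  else (s - 1) + ((Finset.Icc 1 i).filter (fun j => j ∉ A)).card

/-- The number of positions `i ∈ {1, …, a₁+a₂}` guessed correctly under the optimal
strategy guess `⌊i/2⌋ + 1`. -/
def halfCorrect (a1 a2 s : ℕ) (A : Finset ℕ) : ℕ :=
  ((Finset.Icc 1 (a1 + a2)).filter (fun i => halfVal s A i = i / 2 + 1)).card

/-- The generating function `G(a₁, a₂, s) = Σ_A q^{c(A)}`, where `A` ranges over all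
subsets of `{1, …, a₁+a₂}` of size `a₁`. -/
noncomputable def G (a1 a2 s : ℕ) : Polynomial ℚ :=
  ∑ A ∈ Finset.powersetCard a1 (Finset.Icc 1 (a1 + a2)),
    (Polynomial.X : Polynomial ℚ) ^ halfCorrect a1 a2 s A

/-- Kronecker delta. -/
def kdelta (x y : ℕ) : ℕ := if x = y then 1 else 0

lemma halfVal_insert_lt (s n : ℕ) (A : Finset ℕ) (i : ℕ) (hi : i < n) :
    halfVal s (insert n A) i = halfVal s A i := by
  have h2 : (Finset.Icc 1 i).filter (fun j => j ∈ insert n A)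
      = (Finset.Icc 1 i).filter (fun j => j ∈ A) := by
    apply Finset.filter_congr
    intro j hj
    simp only [Finset.mem_Icc] at hj
    simp only [Finset.mem_insert, eq_iff_iff]
    constructor
    · rintro (rfl | h)
      · omega
      · exact h
    · exact Or.inr
  have h3 : (Finset.Icc 1 i).filter (fun j => j ∉ insert n A)
      = (Finset.Icc 1 i).filter (fun j => j ∉ A) := by
    apply Finset.filter_congr
    intro j hj
    simp only [Finset.mem_Icc] at hj
    simp only [Finset.mem_insert, not_or, eq_iff_iff]
    constructor
    · tauto
    · intro h; exact ⟨by omega, h⟩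
  have h4 : i ∈ insert n A ↔ i ∈ A := by
    simp only [Finset.mem_insert]
    constructor
    · rintro (rfl | h)
      · omega
      · exact h
    · exact Or.inr
  unfold halfVal
  by_cases h : i ∈ A
  · rw [if_pos h, if_pos (h4.mpr h), h2]
  · rw [if_neg h, if_neg (fun hh => h (h4.mp hh)), h3]

lemma card_filter_mem (A : Finset ℕ) (n : ℕ) (hA : A ⊆ Finset.Icc 1 n) :
    ((Finset.Icc 1 n).filter (fun j => j ∈ A)).card = A.card := by
  rw [Finset.filter_mem_eq_inter, Finset.inter_eq_right.mpr hA]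

lemma card_filter_not_mem (A : Finset ℕ) (n : ℕ) (hA : A ⊆ Finset.Icc 1 n) :
    ((Finset.Icc 1 n).filter (fun j => j ∉ A)).card = n - A.card := by
  have h := Finset.card_filter_add_card_filter_not
    (s := Finset.Icc 1 n) (p := fun j => j ∈ A)
  have hn : (Finset.Icc 1 n).card = n := by simp
  have hm := card_filter_mem A n hA
  omega

lemma halfCorrect_insert (a1 a2 s : ℕ) (ha1 : 1 ≤ a1) (ha2 : 1 ≤ a2)
    (A : Finset ℕ) (hA : A ∈ Finset.powersetCard (a1 - 1) (Finset.Icc 1 (a1 + a2 - 1))) :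
    halfCorrect a1 a2 s (insert (a1 + a2) A)
      = halfCorrect (a1 - 1) a2 s A + kdelta ((a1 + a2) / 2 + 1) a1 := by
  set n := a1 + a2 with hn_def
  obtain ⟨hsub, hcard⟩ := Finset.mem_powersetCard.mp hA
  have hn : 2 ≤ n := by omega
  have hrange : (a1 - 1) + a2 = n - 1 := by omega
  have hicc : Finset.Icc 1 n = insert n (Finset.Icc 1 (n - 1)) := by
    ext j; simp only [Finset.mem_Icc, Finset.mem_insert]; omega
  have hnmem : n ∉ Finset.Icc 1 (n - 1) := by simp only [Finset.mem_Icc]; omega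
  have hAn : n ∉ A := fun h => hnmem (hsub h)
  have hfe : (Finset.Icc 1 (n - 1)).filter (fun i => halfVal s (insert n A) i = i / 2 + 1)
      = (Finset.Icc 1 (n - 1)).filter (fun i => halfVal s A i = i / 2 + 1) := by
    apply Finset.filter_congr
    intro i hi
    simp only [Finset.mem_Icc] at hi
    rw [halfVal_insert_lt s n A i (by omega)]
  have hvn : halfVal s (insert n A) n = a1 := by
    unfold halfVal
    rw [if_pos (Finset.mem_insert_self n A)]
    have hsub' : insert n A ⊆ Finset.Icc 1 n := by
      intro j hj
      rcases Finset.mem_insert.mp hj with rfl | h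
      · simp only [Finset.mem_Icc]; omega
      · have := hsub h; simp only [Finset.mem_Icc] at this ⊢; omega
    rw [card_filter_mem _ _ hsub', Finset.card_insert_of_notMem hAn, hcard]
    omega
  unfold halfCorrect
  rw [hrange, hicc, Finset.filter_insert]
  by_cases hd : n / 2 + 1 = a1
  · rw [if_pos (by rw [hvn]; omega),
      Finset.card_insert_of_notMem (fun h => hnmem (Finset.mem_filter.mp h).1), hfe]
    simp [kdelta, hd]
  · rw [if_neg (by rw [hvn]; omega), hfe]
    simp [kdelta, hd]

lemma halfCorrect_not (a1 a2 s : ℕ) (ha1 : 1 ≤ a1) (ha2 : 1 ≤ a2) (hs : 1 ≤ s)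
    (A : Finset ℕ) (hA : A ∈ Finset.powersetCard a1 (Finset.Icc 1 (a1 + a2 - 1))) :
    halfCorrect a1 a2 s A
      = halfCorrect a1 (a2 - 1) s A + kdelta ((a1 + a2) / 2 + 1) (s + a2 - 1) := by
  set n := a1 + a2 with hn_def
  obtain ⟨hsub, hcard⟩ := Finset.mem_powersetCard.mp hA
  have hn : 2 ≤ n := by omega
  have hrange : a1 + (a2 - 1) = n - 1 := by omega
  have hicc : Finset.Icc 1 n = insert n (Finset.Icc 1 (n - 1)) := by
    ext j; simp only [Finset.mem_Icc, Finset.mem_insert]; omega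
  have hnmem : n ∉ Finset.Icc 1 (n - 1) := by simp only [Finset.mem_Icc]; omega
  have hAn : n ∉ A := fun h => hnmem (hsub h)
  have hsub' : A ⊆ Finset.Icc 1 n := by
    intro j hj; have := hsub hj; simp only [Finset.mem_Icc] at this ⊢; omega
  have hvn : halfVal s A n = s + a2 - 1 := by
    unfold halfVal
    rw [if_neg hAn, card_filter_not_mem _ _ hsub', hcard]
    omega
  unfold halfCorrect
  rw [hrange, hicc, Finset.filter_insert]
  by_cases hd : n / 2 + 1 = s + a2 - 1
  · rw [if_pos (by rw [hvn]; omega),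
      Finset.card_insert_of_notMem (fun h => hnmem (Finset.mem_filter.mp h).1)]
    simp [kdelta, hd]
  · rw [if_neg (by rw [hvn]; omega)]
    simp [kdelta, hd]

theorem G_recurrence (a1 a2 s : ℕ) (ha1 : 1 ≤ a1) (ha2 : 1 ≤ a2) (hs : 1 ≤ s)
    (c : ℕ) (hc : c = (a1 + a2) / 2 + 1) :
    G a1 a2 s =
      (Polynomial.X : Polynomial ℚ) ^ kdelta c a1 * G (a1 - 1) a2 s
        + (Polynomial.X : Polynomial ℚ) ^ kdelta c (s + a2 - 1) * G a1 (a2 - 1) s := by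
  subst hc
  set n := a1 + a2 with hn_def
  have hn : 2 ≤ n := by omega
  have hr1 : (a1 - 1) + a2 = n - 1 := by omega
  have hr2 : a1 + (a2 - 1) = n - 1 := by omega
  set S := Finset.powersetCard a1 (Finset.Icc 1 n) with hS
  have hsplit := Finset.sum_filter_add_sum_filter_not S (fun A => n ∈ A)
    (fun A => (Polynomial.X : Polynomial ℚ) ^ halfCorrect a1 a2 s A)
  have h1 : ∑ A ∈ S.filter (fun A => n ∈ A),
      (Polynomial.X : Polynomial ℚ) ^ halfCorrect a1 a2 s A
      = ∑ B ∈ Finset.powersetCard (a1 - 1) (Finset.Icc 1 (n - 1)),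
        (Polynomial.X : Polynomial ℚ) ^ (halfCorrect (a1 - 1) a2 s B
          + kdelta (n / 2 + 1) a1) := by
    apply Finset.sum_nbij' (i := fun A => A.erase n) (j := fun B => insert n B)
    · intro A hA
      rw [Finset.mem_filter, hS, Finset.mem_powersetCard] at hA
      obtain ⟨⟨hsub, hcard⟩, hmem⟩ := hA
      rw [Finset.mem_powersetCard]
      constructor
      · intro j hj
        rw [Finset.mem_erase] at hj
        have := hsub hj.2
        simp only [Finset.mem_Icc] at this ⊢
        omega
      · rw [Finset.card_erase_of_mem hmem, hcard]
    · intro B hB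
      rw [Finset.mem_powersetCard] at hB
      obtain ⟨hsub, hcard⟩ := hB
      have hnB : n ∉ B := fun h => by
        have := hsub h; simp only [Finset.mem_Icc] at this; omega
      rw [Finset.mem_filter, hS, Finset.mem_powersetCard]
      refine ⟨⟨?_, ?_⟩, Finset.mem_insert_self n B⟩
      · intro j hj
        rcases Finset.mem_insert.mp hj with rfl | h
        · simp only [Finset.mem_Icc]; omega
        · have := hsub h; simp only [Finset.mem_Icc] at this ⊢; omega
      · rw [Finset.card_insert_of_notMem hnB, hcard]; omega
    · intro A hA
      rw [Finset.mem_filter] at hA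
      exact Finset.insert_erase hA.2
    · intro B hB
      rw [Finset.mem_powersetCard] at hB
      have hnB : n ∉ B := fun h => by
        have := hB.1 h; simp only [Finset.mem_Icc] at this; omega
      exact Finset.erase_insert hnB
    · intro A hA
      rw [Finset.mem_filter, hS, Finset.mem_powersetCard] at hA
      obtain ⟨⟨hsub, hcard⟩, hmem⟩ := hA
      have hmemB : A.erase n ∈ Finset.powersetCard (a1 - 1) (Finset.Icc 1 (n - 1)) := by
        rw [Finset.mem_powersetCard]
        constructor
        · intro j hj
          rw [Finset.mem_erase] at hj
          have := hsub hj.2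
          simp only [Finset.mem_Icc] at this ⊢
          omega
        · rw [Finset.card_erase_of_mem hmem, hcard]
      have := halfCorrect_insert a1 a2 s ha1 ha2 (A.erase n) hmemB
      rw [Finset.insert_erase hmem] at this
      rw [this]
  have h2 : S.filter (fun A => n ∉ A) = Finset.powersetCard a1 (Finset.Icc 1 (n - 1)) := by
    ext A
    rw [Finset.mem_filter, hS, Finset.mem_powersetCard, Finset.mem_powersetCard]
    constructor
    · rintro ⟨⟨hsub, hcard⟩, hmem⟩
      refine ⟨?_, hcard⟩
      intro j hj
      have := hsub hj
      simp only [Finset.mem_Icc] at this ⊢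
      have : j ≠ n := fun h => hmem (h ▸ hj)
      omega
    · rintro ⟨hsub, hcard⟩
      have hnA : n ∉ A := fun h => by
        have := hsub h; simp only [Finset.mem_Icc] at this; omega
      refine ⟨⟨?_, hcard⟩, hnA⟩
      intro j hj
      have := hsub hj; simp only [Finset.mem_Icc] at this ⊢; omega
  have h3 : ∑ A ∈ S.filter (fun A => n ∉ A),
      (Polynomial.X : Polynomial ℚ) ^ halfCorrect a1 a2 s A
      = ∑ B ∈ Finset.powersetCard a1 (Finset.Icc 1 (n - 1)),
        (Polynomial.X : Polynomial ℚ) ^ (halfCorrect a1 (a2 - 1) s B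
          + kdelta (n / 2 + 1) (s + a2 - 1)) := by
    rw [h2]
    apply Finset.sum_congr rfl
    intro B hB
    rw [halfCorrect_not a1 a2 s ha1 ha2 hs B hB]
  have hG1 : G (a1 - 1) a2 s
      = ∑ B ∈ Finset.powersetCard (a1 - 1) (Finset.Icc 1 (n - 1)),
        (Polynomial.X : Polynomial ℚ) ^ halfCorrect (a1 - 1) a2 s B := by
    unfold G
    rw [hr1]
  have hG2 : G a1 (a2 - 1) s
      = ∑ B ∈ Finset.powersetCard a1 (Finset.Icc 1 (n - 1)),
        (Polynomial.X : Polynomial ℚ) ^ halfCorrect a1 (a2 - 1) s B := by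
    unfold G
    rw [hr2]
  have : G a1 a2 s = ∑ A ∈ S.filter (fun A => n ∈ A),
      (Polynomial.X : Polynomial ℚ) ^ halfCorrect a1 a2 s A
      + ∑ A ∈ S.filter (fun A => n ∉ A),
      (Polynomial.X : Polynomial ℚ) ^ halfCorrect a1 a2 s A := by
    unfold G
    rw [← hsplit]
  rw [this, h1, h3, hG1, hG2, Finset.mul_sum, Finset.mul_sum]
  congr 1 <;> (apply Finset.sum_congr rfl; intro B _; rw [pow_add, mul_comm])
end

section
/- Let R be a commutative ℚ-algebra, let h ≥ 0 and r ≥ 1 be integers, and let y₁,…,y_h ∈ R satisfy y_i² = y_i for all i. Then (y₁ + ⋯ + y_h)^r = Σ_{P} [ r! / ∏_{j=1}^{s} (p_j!)^{m_j} ] · [ m! / ∏_{j=1}^{s} m_j! ] · M_m, where the sum is over all partitions P of r, written with distinct parts p₁,…,p_s having multiplicities m₁,…,m_s and total number of parts m = m₁+⋯+m_s, and M_m = Σ_{1 ≤ i₁ < i₂ < … < i_m ≤ h} y_{i₁} y_{i₂} ⋯ y_{i_m}. -/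
open Finset Nat

section Aux

variable {ι : Type*} [DecidableEq ι]

/-- Functions supported inside `s` whose multiset of values on `s` is `M`. -/
def FF (s : Finset ι) (M : Multiset ℕ) : Finset (ι → ℕ) :=
  (Finset.piAntidiag s M.sum).filter fun k => s.val.map k = M

lemma mem_FF {s : Finset ι} {M : Multiset ℕ} {k : ι → ℕ} :
    k ∈ FF s M ↔ (∀ i, k i ≠ 0 → i ∈ s) ∧ s.val.map k = M := by
  simp only [FF, Finset.mem_filter, Finset.mem_piAntidiag]
  constructor
  · rintro ⟨⟨-, h2⟩, h3⟩
    exact ⟨h2, h3⟩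
  · rintro ⟨h2, h3⟩
    exact ⟨⟨by rw [Finset.sum_eq_multiset_sum, h3], h2⟩, h3⟩

lemma prod_count_erase (M : Multiset ℕ) {v : ℕ} (hv : v ∈ M) :
    (∏ b ∈ (M.erase v).toFinset, (((M.erase v).count b)! : ℚ)) * (M.count v : ℚ)
      = ∏ b ∈ M.toFinset, ((M.count b)! : ℚ) := by
  have hsub : (M.erase v).toFinset ⊆ M.toFinset :=
    Multiset.toFinset_subset.2 (Multiset.erase_subset _ _)
  have hvt : v ∈ M.toFinset := Multiset.mem_toFinset.2 hv
  have h1 : (∏ b ∈ (M.erase v).toFinset, (((M.erase v).count b)! : ℚ))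
      = ∏ b ∈ M.toFinset, (((M.erase v).count b)! : ℚ) := by
    refine Finset.prod_subset hsub fun b _ hnb => ?_
    have hb0 : (M.erase v).count b = 0 :=
      Multiset.count_eq_zero.2 fun hm => hnb (Multiset.mem_toFinset.2 hm)
    simp [hb0]
  rw [h1, ← Finset.mul_prod_erase _ _ hvt,
    ← Finset.mul_prod_erase _ (fun b => ((M.count b)! : ℚ)) hvt]
  have h2 : (∏ b ∈ M.toFinset.erase v, (((M.erase v).count b)! : ℚ))
      = ∏ b ∈ M.toFinset.erase v, ((M.count b)! : ℚ) :=
    Finset.prod_congr rfl fun b hb => by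
      rw [Multiset.count_erase_of_ne (Finset.ne_of_mem_erase hb)]
  rw [h2, Multiset.count_erase_self]
  have hc : 0 < M.count v := Multiset.count_pos.2 hv
  have hn : (M.count v) * ((M.count v - 1))! = (M.count v)! := Nat.mul_factorial_pred hc.ne'
  push_cast [← hn]
  ring

lemma FF_card : ∀ (s : Finset ι) (M : Multiset ℕ), M.card = s.card →
    ((FF s M).card : ℚ) * ∏ a ∈ M.toFinset, ((M.count a)! : ℚ) = ((M.card)! : ℚ) := by
  intro s
  induction s using Finset.cons_induction with
  | empty =>
    intro M hM
    have hM0 : M = 0 := Multiset.card_eq_zero.1 (by simpa using hM)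
    subst hM0
    have : FF (∅ : Finset ι) 0 = {fun _ => 0} := by
      ext k
      simp [mem_FF, funext_iff]
    simp [this]
  | cons a s ha ih =>
    intro M hM
    rw [Finset.card_cons] at hM
    have hmaps : ∀ k ∈ FF (Finset.cons a s ha) M, k a ∈ M.toFinset := by
      intro k hk
      rw [mem_FF] at hk
      refine Multiset.mem_toFinset.2 ?_
      rw [← hk.2]
      exact Multiset.mem_map_of_mem _ (by simp [Finset.cons_val])
    rw [Finset.card_eq_sum_card_fiberwise hmaps]
    have hfib : ∀ v ∈ M.toFinset,
        ((FF (Finset.cons a s ha) M).filter fun k => k a = v).card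
          = (FF s (M.erase v)).card := by
      intro v hv
      have hvM : v ∈ M := Multiset.mem_toFinset.1 hv
      refine Finset.card_bij' (fun k _ => Function.update k a 0)
        (fun k' _ => Function.update k' a v) ?_ ?_ ?_ ?_
      · intro k hk
        rw [Finset.mem_filter, mem_FF] at hk
        obtain ⟨⟨hsupp, hmap⟩, hka⟩ := hk
        rw [Finset.cons_val, Multiset.map_cons, hka] at hmap
        have hmap' : s.val.map k = M.erase v := by
          rw [← hmap, Multiset.erase_cons_head]
        rw [mem_FF]
        constructor
        · intro i hi
          by_cases hia : i = a
          · subst hia; simp at hi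
          · rw [Function.update_of_ne hia] at hi
            rcases Finset.mem_cons.1 (hsupp i hi) with h | h
            · exact absurd h hia
            · exact h
        · rw [← hmap']
          refine Multiset.map_congr rfl fun i hi => ?_
          exact Function.update_of_ne (fun hia => ha (by rw [← hia]; exact Finset.mem_def.2 hi)) _ _
      · intro k' hk'
        rw [mem_FF] at hk'
        obtain ⟨hsupp, hmap⟩ := hk'
        rw [Finset.mem_filter, mem_FF]
        refine ⟨⟨?_, ?_⟩, Function.update_self _ _ _⟩
        · intro i hi
          by_cases hia : i = a
          · subst hia; exact Finset.mem_cons_self _ _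
          · rw [Function.update_of_ne hia] at hi
            exact Finset.mem_cons.2 (Or.inr (hsupp i hi))
        · rw [Finset.cons_val, Multiset.map_cons, Function.update_self]
          have : s.val.map (Function.update k' a v) = s.val.map k' :=
            Multiset.map_congr rfl fun i hi =>
              Function.update_of_ne (fun hia => ha (by rw [← hia]; exact Finset.mem_def.2 hi)) _ _
          rw [this, hmap, Multiset.cons_erase hvM]
      · intro k hk
        rw [Finset.mem_filter] at hk
        rw [Function.update_idem, ← hk.2, Function.update_eq_self]
      · intro k' hk'
        rw [mem_FF] at hk'
        have hk'a : k' a = 0 := by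
          by_contra h0
          exact ha (hk'.1 a h0)
        rw [Function.update_idem, ← hk'a, Function.update_eq_self]
    rw [Finset.sum_congr rfl hfib]
    push_cast
    rw [Finset.sum_mul]
    have hterm : ∀ v ∈ M.toFinset,
        ((FF s (M.erase v)).card : ℚ) * ∏ b ∈ M.toFinset, ((M.count b)! : ℚ)
          = ((s.card)! : ℚ) * (M.count v : ℚ) := by
      intro v hv
      have hvM : v ∈ M := Multiset.mem_toFinset.1 hv
      have hcard : (M.erase v).card = s.card := by
        rw [Multiset.card_erase_of_mem hvM, hM]
        rfl
      have hih := ih (M.erase v) hcard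
      rw [← prod_count_erase M hvM, ← mul_assoc, hih, hcard]
    rw [Finset.sum_congr rfl hterm, ← Finset.mul_sum]
    have hsum : (∑ v ∈ M.toFinset, (M.count v : ℚ)) = (M.card : ℚ) := by
      rw [← Nat.cast_sum]
      exact_mod_cast congrArg Nat.cast (Multiset.toFinset_sum_count_eq M)
    rw [hsum, hM]
    push_cast [Nat.factorial_succ]
    ring

variable [Fintype ι]

/-- The support of a function to `ℕ`. -/
def suppF (k : ι → ℕ) : Finset ι := Finset.univ.filter fun i => k i ≠ 0

/-- The partition of `r` obtained from the nonzero values of `k` (junk if sums differ). -/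
def partOf (r : ℕ) (k : ι → ℕ) : Nat.Partition r :=
  if H : ((suppF k).val.map k).sum = r then
    { parts := (suppF k).val.map k
      parts_pos := fun {p} hp => by
        obtain ⟨i, hi, rfl⟩ := Multiset.mem_map.1 hp
        have : k i ≠ 0 := by
          have := Finset.mem_def.2 hi
          simpa [suppF] using this
        exact Nat.pos_of_ne_zero this
      parts_sum := H }
  else
    { parts := Multiset.replicate r 1
      parts_pos := fun {p} hp => by simp [Multiset.eq_of_mem_replicate hp]
      parts_sum := by simp }

lemma fiber_eq {r : ℕ} (P : Nat.Partition r) (s : Finset ι) :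
    ((Finset.piAntidiag (Finset.univ : Finset ι) r).filter
        fun k => (partOf r k, suppF k) = (P, s)) = FF s P.parts := by
  ext k
  simp only [Finset.mem_filter, Finset.mem_piAntidiag, mem_FF, Prod.mk.injEq]
  constructor
  · rintro ⟨⟨hsum, -⟩, hP, hs⟩
    have hsum' : ((suppF k).val.map k).sum = r := by
      rw [← Finset.sum_eq_multiset_sum, suppF, Finset.sum_filter_ne_zero]
      exact hsum
    have hparts : (partOf r k).parts = (suppF k).val.map k := by
      rw [partOf, dif_pos hsum']
    constructor
    · intro i hi
      rw [← hs]
      simp [suppF, hi]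
    · rw [← hs, ← hparts, hP]
  · rintro ⟨hsupp, hmap⟩
    have hks : ∀ i ∈ s, k i ≠ 0 := by
      intro i hi
      have hmem : k i ∈ P.parts := by
        rw [← hmap]
        exact Multiset.mem_map_of_mem _ (Finset.mem_def.1 hi)
      exact (P.parts_pos hmem).ne'
    have hs_eq : suppF k = s := by
      ext i
      simp only [suppF, Finset.mem_filter, Finset.mem_univ, true_and]
      exact ⟨fun hi => hsupp i hi, fun hi => hks i hi⟩
    have hsum' : ((suppF k).val.map k).sum = r := by
      rw [hs_eq, hmap, P.parts_sum]
    have husum : ∑ i ∈ (Finset.univ : Finset ι), k i = r := by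
      rw [← Finset.sum_filter_ne_zero]
      rw [← hsum', Finset.sum_eq_multiset_sum]
      rfl
    refine ⟨⟨husum, fun i _ => Finset.mem_univ i⟩, ?_, hs_eq⟩
    ext1
    rw [partOf, dif_pos hsum']
    show Multiset.map k (suppF k).val = P.parts
    rw [hs_eq, hmap]

end Aux

theorem power_sum_idempotents_partition_expansion
    (R : Type*) [CommRing R] [Algebra ℚ R] (h r : ℕ) (hr : 1 ≤ r)
    (y : Fin h → R) (hy : ∀ i, y i * y i = y i) :
    (∑ i, y i) ^ r =
      ∑ P : Nat.Partition r,
        algebraMap ℚ R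
            ((r ! : ℚ) / (∏ p ∈ P.parts.toFinset, ((p ! : ℚ)) ^ (P.parts.count p))
              * ((Multiset.card P.parts)! : ℚ)
              / (∏ p ∈ P.parts.toFinset, (((P.parts.count p)! : ℚ)))) *
          ∑ s ∈ Finset.powersetCard (Multiset.card P.parts) (Finset.univ : Finset (Fin h)),
            ∏ i ∈ s, y i := by
  have ypow : ∀ (i : Fin h) (n : ℕ), n ≠ 0 → y i ^ n = y i := by
    intro i n hn
    induction n with
    | zero => exact absurd rfl hn
    | succ n ih =>
      rcases Nat.eq_zero_or_pos n with h0 | h0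
      · subst h0; simp
      · rw [pow_succ, ih h0.ne', hy]
  rw [show (∑ i, y i) = ∑ i ∈ Finset.univ, y i from rfl,
    Finset.sum_pow_eq_sum_piAntidiag]
  rw [← Finset.sum_fiberwise_of_maps_to (g := fun k => (partOf r k, suppF k))
    (t := (Finset.univ : Finset (Nat.Partition r)) ×ˢ (Finset.univ : Finset (Finset (Fin h))))
    (fun k _ => Finset.mem_product.2 ⟨Finset.mem_univ _, Finset.mem_univ _⟩)]
  rw [Finset.sum_product]
  refine Finset.sum_congr rfl fun P _ => ?_
  have hfval : ∀ s : Finset (Fin h), ∀ k ∈ FF s P.parts,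
      (↑(Nat.multinomial Finset.univ k) : R) * ∏ i ∈ Finset.univ, y i ^ k i
        = algebraMap ℚ R
            ((r ! : ℚ) / ∏ p ∈ P.parts.toFinset, ((p ! : ℚ)) ^ (P.parts.count p))
          * ∏ i ∈ s, y i := by
    intro s k hk
    rw [mem_FF] at hk
    obtain ⟨hsupp, hmap⟩ := hk
    have hk0 : ∀ i, i ∉ s → k i = 0 := by
      intro i hi
      by_contra h0
      exact hi (hsupp i h0)
    have hks : ∀ i ∈ s, k i ≠ 0 := by
      intro i hi
      have hmem : k i ∈ P.parts := by
        rw [← hmap]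
        exact Multiset.mem_map_of_mem _ (Finset.mem_def.1 hi)
      exact (P.parts_pos hmem).ne'
    have hprody : (∏ i ∈ Finset.univ, y i ^ k i) = ∏ i ∈ s, y i := by
      rw [← Finset.prod_subset (Finset.subset_univ s)
        (fun i _ hi => by rw [hk0 i hi, pow_zero])]
      exact Finset.prod_congr rfl fun i hi => ypow i (k i) (hks i hi)
    have hprodfact : (∏ i ∈ Finset.univ, (k i)!)
        = ∏ p ∈ P.parts.toFinset, (p !) ^ (P.parts.count p) := by
      rw [← Finset.prod_subset (Finset.subset_univ s)
        (fun i _ hi => by rw [hk0 i hi]; rfl)]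
      rw [Finset.prod_eq_multiset_prod]
      have : s.val.map (fun i => (k i)!) = (s.val.map k).map (fun p => p !) := by
        rw [Multiset.map_map]
        rfl
      rw [this, hmap, Finset.prod_multiset_map_count]
    have husum : ∑ i ∈ (Finset.univ : Finset (Fin h)), k i = r := by
      rw [← Finset.sum_subset (Finset.subset_univ s) (fun i _ hi => hk0 i hi)]
      rw [Finset.sum_eq_multiset_sum, hmap, P.parts_sum]
    have hspec := Nat.multinomial_spec (Finset.univ : Finset (Fin h)) k
    rw [husum, hprodfact] at hspec
    have hne : (∏ p ∈ P.parts.toFinset, ((p ! : ℚ)) ^ (P.parts.count p)) ≠ 0 := by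
      refine Finset.prod_ne_zero_iff.2 fun p _ => ?_
      exact pow_ne_zero _ (Nat.cast_ne_zero.2 (Nat.factorial_ne_zero p))
    have hmult : (Nat.multinomial Finset.univ k : ℚ)
        = (r ! : ℚ) / ∏ p ∈ P.parts.toFinset, ((p ! : ℚ)) ^ (P.parts.count p) := by
      rw [eq_div_iff hne]
      rw [mul_comm]
      exact_mod_cast congrArg Nat.cast hspec
    have hcast : (↑(Nat.multinomial Finset.univ k) : R)
        = algebraMap ℚ R (Nat.multinomial Finset.univ k : ℚ) := by
      rw [map_natCast]
    rw [hprody, hcast, hmult]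
  have hvan : ∀ s ∈ (Finset.univ : Finset (Finset (Fin h))),
      s ∉ Finset.powersetCard (Multiset.card P.parts) (Finset.univ : Finset (Fin h)) →
      (∑ k ∈ (Finset.piAntidiag (Finset.univ : Finset (Fin h)) r).filter
          (fun k => (partOf r k, suppF k) = (P, s)),
        (↑(Nat.multinomial Finset.univ k) : R) * ∏ i ∈ Finset.univ, y i ^ k i) = 0 := by
    intro s _ hs
    rw [fiber_eq]
    have hempty : FF s P.parts = ∅ := by
      refine Finset.eq_empty_of_forall_notMem fun k hk => ?_
      rw [mem_FF] at hk
      refine hs (Finset.mem_powersetCard.2 ⟨Finset.subset_univ s, ?_⟩)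
      rw [← hk.2]
      simp
    rw [hempty, Finset.sum_empty]
  rw [← Finset.sum_subset (Finset.subset_univ
    (Finset.powersetCard (Multiset.card P.parts) (Finset.univ : Finset (Fin h)))) hvan]
  rw [Finset.mul_sum]
  refine Finset.sum_congr rfl fun s hs => ?_
  have hscard : s.card = Multiset.card P.parts :=
    (Finset.mem_powersetCard.1 hs).2
  rw [fiber_eq]
  rw [Finset.sum_congr rfl (hfval s)]
  rw [Finset.sum_const]
  have hcne : (∏ p ∈ P.parts.toFinset, ((P.parts.count p)! : ℚ)) ≠ 0 := by
    refine Finset.prod_ne_zero_iff.2 fun p _ => ?_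
    exact Nat.cast_ne_zero.2 (Nat.factorial_ne_zero _)
  have hcardQ : ((FF s P.parts).card : ℚ)
      = ((Multiset.card P.parts)! : ℚ)
        / ∏ p ∈ P.parts.toFinset, ((P.parts.count p)! : ℚ) := by
    rw [eq_div_iff hcne]
    exact FF_card s P.parts (by rw [hscard])
  rw [nsmul_eq_mul]
  have : ((FF s P.parts).card : R) = algebraMap ℚ R ((FF s P.parts).card : ℚ) := by
    rw [map_natCast]
  rw [this, hcardQ, ← mul_assoc, ← map_mul]
  congr 2
  field_simp
end

section
/- Let c and k be non-negative integers with c ≤ k. Then there exists a polynomial R with rational coefficients of degree k such that for every non-negative integer L with L + c ≥ k: Γ(L + c + 1/2) / ( Γ(k + 1/2) · (L + c − k)! ) = ( binom(2L, L) / 4^L ) · R(L). -/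
open Polynomial Finset

lemma gamma_nat_add_half (n : ℕ) :
    Real.Gamma ((n : ℝ) + 1 / 2) =
      Real.sqrt Real.pi * (Nat.factorial (2 * n) : ℝ) / (4 ^ n * (Nat.factorial n : ℝ)) := by
  induction n with
  | zero =>
    simp only [Nat.cast_zero, zero_add, mul_zero, Nat.factorial_zero, Nat.cast_one, pow_zero,
      one_mul, mul_one, div_one]
    exact Real.Gamma_one_half_eq
  | succ n ih =>
    have h : ((n : ℝ) + 1) + 1 / 2 = ((n : ℝ) + 1 / 2) + 1 := by ring
    have e1 : Nat.factorial (2 * (n + 1)) = (2 * n + 2) * ((2 * n + 1) * Nat.factorial (2 * n)) := by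
      rw [show 2 * (n + 1) = 2 * n + 1 + 1 from by ring, Nat.factorial_succ, Nat.factorial_succ]
    have e2 : Nat.factorial (n + 1) = (n + 1) * Nat.factorial n := Nat.factorial_succ n
    push_cast [h, e1, e2]
    rw [Real.Gamma_add_one (by positivity), ih]
    have hf : (Nat.factorial n : ℝ) ≠ 0 := by positivity
    have h4 : (4 : ℝ) ^ n ≠ 0 := by positivity
    field_simp
    ring

lemma prod_odd (L c : ℕ) :
    Nat.factorial (2 * (L + c)) * Nat.factorial L =
      Nat.factorial (2 * L) * Nat.factorial (L + c) * 2 ^ c *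
        ∏ i ∈ Finset.range c, (2 * L + 2 * i + 1) := by
  induction c with
  | zero => simp
  | succ c ih =>
    have h1 : 2 * (L + (c + 1)) = (2 * (L + c) + 1) + 1 := by ring
    have h2 : L + (c + 1) = (L + c) + 1 := by ring
    rw [h1, h2, Nat.factorial_succ, Nat.factorial_succ, Nat.factorial_succ,
      Finset.prod_range_succ]
    calc (2 * (L + c) + 1 + 1) * ((2 * (L + c) + 1) * Nat.factorial (2 * (L + c))) * Nat.factorial L
        = (2 * (L + c) + 1 + 1) * (2 * (L + c) + 1) * (Nat.factorial (2 * (L + c)) * Nat.factorial L) := by ring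
      _ = (2 * (L + c) + 1 + 1) * (2 * (L + c) + 1) * (Nat.factorial (2 * L) * Nat.factorial (L + c) * 2 ^ c * ∏ i ∈ Finset.range c, (2 * L + 2 * i + 1)) := by rw [ih]
      _ = _ := by ring

lemma prod_desc (L m : ℕ) (h : m ≤ L) :
    Nat.factorial L = Nat.factorial (L - m) * ∏ j ∈ Finset.range m, (L - j) := by
  induction m with
  | zero => simp
  | succ m ih =>
    have hm : m ≤ L := Nat.le_of_succ_le h
    have hfac : Nat.factorial (L - m) = (L - m) * Nat.factorial (L - (m + 1)) := by
      rw [show L - m = (L - (m + 1)) + 1 from by omega, Nat.factorial_succ]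
    rw [Finset.prod_range_succ, ih hm, hfac]
    ring


/-- For non-negative integers `c ≤ k` there is a rational polynomial `R` of degree `k`
such that `binom(L+c−1/2, k−1/2) = Γ(L+c+1/2)/(Γ(k+1/2)·(L+c−k)!)` equals
`(binom(2L,L)/4^L) · R(L)` for every non-negative integer `L` with `L + c ≥ k`. -/
theorem half_integer_binomial_as_central_binomial (c k : ℕ) (hck : c ≤ k) :
    ∃ R : Polynomial ℚ, R.degree = (k : ℕ) ∧
      ∀ L : ℕ, k ≤ L + c →
        Real.Gamma ((L : ℝ) + (c : ℝ) + 1 / 2) /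
            (Real.Gamma ((k : ℝ) + 1 / 2) * (Nat.factorial (L + c - k) : ℝ)) =
          (Nat.choose (2 * L) L : ℝ) / 4 ^ L * Polynomial.aeval (L : ℝ) R := by
  set q : ℚ := 2 ^ c * 4 ^ (k - c) * (Nat.factorial k : ℚ) / (Nat.factorial (2 * k) : ℚ) with hq
  have hq0 : q ≠ 0 := by
    rw [hq]
    positivity
  refine ⟨Polynomial.C q * (∏ i ∈ Finset.range c, (Polynomial.C 2 * Polynomial.X + Polynomial.C (2 * (i : ℚ) + 1))) *
      (∏ j ∈ Finset.range (k - c), (Polynomial.X - Polynomial.C (j : ℚ))), ?_, ?_⟩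
  · rw [Polynomial.degree_mul, Polynomial.degree_mul, Polynomial.degree_C hq0,
      Polynomial.degree_prod, Polynomial.degree_prod]
    have d1 : ∀ i ∈ Finset.range c, (Polynomial.C (2:ℚ) * Polynomial.X + Polynomial.C (2 * (i : ℚ) + 1)).degree = 1 := by
      intro i _
      exact Polynomial.degree_linear two_ne_zero
    have d2 : ∀ j ∈ Finset.range (k - c), (Polynomial.X - Polynomial.C ((j : ℚ))).degree = 1 := by
      intro j _
      exact Polynomial.degree_X_sub_C _
    rw [Finset.sum_congr rfl d1, Finset.sum_congr rfl d2, Finset.sum_const, Finset.sum_const]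
    simp only [Finset.card_range, nsmul_eq_mul, mul_one, zero_add]
    rw [← Nat.cast_add]
    congr 1
    omega
  · intro L hL
    -- abbreviations
    set A : ℕ := ∏ i ∈ Finset.range c, (2 * L + 2 * i + 1) with hA
    set B : ℕ := ∏ j ∈ Finset.range (k - c), (L - j) with hB
    have hkcL : k - c ≤ L := by omega
    -- evaluate the polynomial
    have heval : Polynomial.aeval (L : ℝ)
        (Polynomial.C q * (∏ i ∈ Finset.range c, (Polynomial.C 2 * Polynomial.X + Polynomial.C (2 * (i : ℚ) + 1))) *
          (∏ j ∈ Finset.range (k - c), (Polynomial.X - Polynomial.C (j : ℚ)))) =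
        (q : ℝ) * (A : ℝ) * (B : ℝ) := by
      rw [map_mul, map_mul, map_prod, map_prod, Polynomial.aeval_C, eq_ratCast]
      have e1 : ∀ i ∈ Finset.range c,
          Polynomial.aeval (L : ℝ) (Polynomial.C (2:ℚ) * Polynomial.X + Polynomial.C (2 * (i : ℚ) + 1)) =
            ((2 * L + 2 * i + 1 : ℕ) : ℝ) := by
        intro i _
        simp only [map_add, map_mul, Polynomial.aeval_C, Polynomial.aeval_X, eq_ratCast]
        push_cast
        ring
      have e2 : ∀ j ∈ Finset.range (k - c),
          Polynomial.aeval (L : ℝ) (Polynomial.X - Polynomial.C ((j : ℚ))) = ((L - j : ℕ) : ℝ) := by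
        intro j hj
        have : j ≤ L := by
          have := Finset.mem_range.mp hj
          omega
        simp [Nat.cast_sub this]
      rw [Finset.prod_congr rfl e1, Finset.prod_congr rfl e2, hA, hB, Nat.cast_prod, Nat.cast_prod]
    rw [heval]
    -- gamma rewrites
    have hLc : (L : ℝ) + (c : ℝ) + 1 / 2 = ((L + c : ℕ) : ℝ) + 1 / 2 := by push_cast; ring
    rw [hLc, gamma_nat_add_half, gamma_nat_add_half]
    -- main identities
    have hsqrt : Real.sqrt Real.pi ≠ 0 := by positivity
    have hf : ∀ n : ℕ, (Nat.factorial n : ℝ) ≠ 0 := fun n => by positivity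
    have h1 : ((Nat.factorial (2 * (L + c)) : ℝ)) * (Nat.factorial L : ℝ) =
        (Nat.factorial (2 * L) : ℝ) * (Nat.factorial (L + c) : ℝ) * 2 ^ c * (A : ℝ) := by
      rw [hA]
      exact_mod_cast congrArg (Nat.cast (R := ℝ)) (prod_odd L c)
    have h2 : (Nat.factorial L : ℝ) = (Nat.factorial (L + c - k) : ℝ) * (B : ℝ) := by
      rw [hB, show L + c - k = L - (k - c) from by omega]
      exact_mod_cast congrArg (Nat.cast (R := ℝ)) (prod_desc L (k - c) hkcL)
    have h3 : ((Nat.choose (2 * L) L : ℝ)) * (Nat.factorial L : ℝ) * (Nat.factorial L : ℝ) =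
        (Nat.factorial (2 * L) : ℝ) := by
      have := Nat.choose_mul_factorial_mul_factorial (show L ≤ 2 * L by omega)
      rw [show 2 * L - L = L from by omega] at this
      exact_mod_cast congrArg (Nat.cast (R := ℝ)) this
    have hqcast : (q : ℝ) = 2 ^ c * 4 ^ (k - c) * (Nat.factorial k : ℝ) / (Nat.factorial (2 * k) : ℝ) := by
      rw [hq]
      push_cast
      ring
    have h4m : (4 : ℝ) ^ (L + c) = 4 ^ L * 4 ^ c := pow_add 4 L c
    have h4k : (4 : ℝ) ^ k = 4 ^ (k - c) * 4 ^ c := by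
      rw [← pow_add]
      congr 1
      omega
    rw [hqcast, h4m, h4k]
    have hA0 : (A : ℝ) ≠ 0 := by
      rw [hA]
      push_cast
      positivity
    have h4 : (4 : ℝ) ≠ 0 := by norm_num
    have key : ((Nat.factorial (2 * (L + c)) : ℝ)) * (Nat.factorial L : ℝ) * (Nat.factorial L : ℝ) =
        ((Nat.choose (2 * L) L : ℝ)) * (Nat.factorial L : ℝ) * (Nat.factorial L : ℝ) *
          (Nat.factorial (L + c) : ℝ) * 2 ^ c * (A : ℝ) * (Nat.factorial (L + c - k) : ℝ) * (B : ℝ) := by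
      calc ((Nat.factorial (2 * (L + c)) : ℝ)) * (Nat.factorial L : ℝ) * (Nat.factorial L : ℝ)
          = ((Nat.factorial (2 * L) : ℝ) * (Nat.factorial (L + c) : ℝ) * 2 ^ c * (A : ℝ)) * (Nat.factorial L : ℝ) := by
            linear_combination (Nat.factorial L : ℝ) * h1
        _ = ((Nat.factorial (2 * L) : ℝ) * (Nat.factorial (L + c) : ℝ) * 2 ^ c * (A : ℝ)) *
              ((Nat.factorial (L + c - k) : ℝ) * (B : ℝ)) := by
            linear_combination ((Nat.factorial (2 * L) : ℝ) * (Nat.factorial (L + c) : ℝ) * 2 ^ c * (A : ℝ)) * h2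
        _ = _ := by
            linear_combination (-((Nat.factorial (L + c) : ℝ) * 2 ^ c * (A : ℝ) *
              (Nat.factorial (L + c - k) : ℝ) * (B : ℝ))) * h3
    have key2 : ((Nat.factorial (2 * (L + c)) : ℝ)) =
        ((Nat.choose (2 * L) L : ℝ)) * (Nat.factorial (L + c) : ℝ) * 2 ^ c * (A : ℝ) *
          (Nat.factorial (L + c - k) : ℝ) * (B : ℝ) := by
      apply mul_right_cancel₀ (hf L)
      apply mul_right_cancel₀ (hf L)
      linear_combination key
    field_simp
    linear_combination key2
end

section
/- Let k be a non-negative integer and let a₀, a₁, …, a_k be real numbers. Then there exists a polynomial P with real coefficients of degree at most k such that for every non-negative integer L: Σ_{i=0}^{min(L,k)} a_i · Γ(L − i + k + 1/2) / ( Γ(k + 1/2) · (L − i)! ) = ( binom(2L, L) / 4^L ) · P(L). -/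
open Finset

noncomputable def cb (n : ℕ) : ℝ := (Nat.choose (2 * n) n : ℝ) / 4 ^ n

lemma cb_succ (n : ℕ) : cb (n + 1) * ((n : ℝ) + 1) = cb n * ((n : ℝ) + 1 / 2) := by
  have h := Nat.succ_mul_centralBinom_succ n
  simp only [Nat.centralBinom] at h
  have h' : ((n : ℝ) + 1) * ((2 * (n + 1)).choose (n + 1) : ℝ)
      = 2 * (2 * (n : ℝ) + 1) * ((2 * n).choose n : ℝ) := by exact_mod_cast congrArg Nat.cast h
  unfold cb
  rw [pow_succ, div_mul_eq_mul_div, div_mul_eq_mul_div,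
    div_eq_div_iff (by positivity) (by positivity)]
  linear_combination (4 : ℝ) ^ n * h'

lemma cb_key (m i : ℕ) :
    cb m * ∏ j ∈ Finset.range i, ((m : ℝ) + j + 1 / 2)
      = cb (m + i) * ∏ j ∈ Finset.range i, ((m : ℝ) + j + 1) := by
  induction i with
  | zero => simp
  | succ i ih =>
      rw [Finset.prod_range_succ, Finset.prod_range_succ, show m + (i+1) = (m+i)+1 from rfl]
      have h2 := cb_succ (m + i)
      push_cast at h2
      linear_combination ((m : ℝ) + i + 1/2) * ih
        - (∏ j ∈ Finset.range i, ((m : ℝ) + j + 1)) * h2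

lemma gamma_half (m : ℕ) :
    Real.Gamma ((m : ℝ) + 1 / 2) = Real.sqrt Real.pi * cb m * (Nat.factorial m : ℝ) := by
  induction m with
  | zero =>
      norm_num [cb]
      exact Real.Gamma_one_half_eq
  | succ m ih =>
      have h1 : ((m : ℝ) + 1 + 1 / 2) = ((m : ℝ) + 1 / 2) + 1 := by ring
      push_cast
      rw [h1, Real.Gamma_add_one (by positivity), ih]
      have h2 := cb_succ m
      rw [Nat.factorial_succ]
      push_cast
      linear_combination (-(Real.sqrt Real.pi * (Nat.factorial m : ℝ))) * h2

lemma gamma_shift (k m : ℕ) :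
    Real.Gamma ((m : ℝ) + (k : ℝ) + 1 / 2)
      = Real.Gamma ((m : ℝ) + 1 / 2) * ∏ j ∈ Finset.range k, ((m : ℝ) + j + 1 / 2) := by
  induction k with
  | zero => simp
  | succ k ih =>
      have h1 : ((m : ℝ) + ((k : ℕ) + 1 : ℕ) + 1 / 2) = ((m : ℝ) + (k : ℝ) + 1 / 2) + 1 := by
        push_cast; ring
      rw [h1, Real.Gamma_add_one (by positivity), ih, Finset.prod_range_succ]
      ring

lemma prod_shift (x : ℝ) (i : ℕ) :
    ∏ j ∈ Finset.range i, (x - (i : ℝ) + j + 1) = ∏ j ∈ Finset.range i, (x - (j : ℝ)) := by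
  induction i with
  | zero => simp
  | succ i ih =>
      rw [Finset.prod_range_succ', Finset.prod_range_succ]
      push_cast
      have h0 : ∀ j ∈ Finset.range i, x - ((i : ℝ) + 1) + ((j : ℝ) + 1) + 1
          = x - (i : ℝ) + (j : ℝ) + 1 := fun j _ => by ring
      rw [Finset.prod_congr rfl h0, ih]
      congr 1
      ring

/-- For real numbers `a₀, …, a_k` there is a real polynomial `P` of degree at most `k`
with `Σ_{i=0}^{min(L,k)} a_i · binom(L−i+k−1/2, k−1/2) = (binom(2L,L)/4^L) · P(L)` for every
non-negative integer `L`, where `binom(L−i+k−1/2, k−1/2) = Γ(L−i+k+1/2)/(Γ(k+1/2)·(L−i)!)`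
(the left-hand side is the coefficient of `y^L` in `H(y)/(1−y)^{k+1/2}`). -/
theorem coeff_fractional_exponent_polynomial (k : ℕ) (a : ℕ → ℝ) :
    ∃ P : Polynomial ℝ, P.natDegree ≤ k ∧
      ∀ L : ℕ,
        ∑ i ∈ Finset.range (min L k + 1),
            a i * Real.Gamma ((L : ℝ) - (i : ℝ) + (k : ℝ) + 1 / 2) /
              (Real.Gamma ((k : ℝ) + 1 / 2) * (Nat.factorial (L - i) : ℝ)) =
          (Nat.choose (2 * L) L : ℝ) / 4 ^ L * Polynomial.eval (L : ℝ) P := by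
  have hΓpos : 0 < Real.Gamma ((k : ℝ) + 1 / 2) := Real.Gamma_pos_of_pos (by positivity)
  set r : ℝ := Real.sqrt Real.pi / Real.Gamma ((k : ℝ) + 1 / 2) with hr
  refine ⟨∑ i ∈ Finset.range (k + 1), Polynomial.C (a i * r) *
      ((∏ j ∈ Finset.range i, (Polynomial.X - Polynomial.C (j : ℝ))) *
       (∏ t ∈ Finset.range (k - i), (Polynomial.X + Polynomial.C ((t : ℝ) + 1 / 2)))), ?_, ?_⟩
  · apply Polynomial.natDegree_sum_le_of_forall_le
    intro i hi
    simp only [Finset.mem_range] at hi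
    have h1 : (∏ j ∈ Finset.range i, (Polynomial.X - Polynomial.C (j : ℝ))).natDegree ≤ i := by
      refine le_trans (Polynomial.natDegree_prod_le _ _) ?_
      refine le_trans (Finset.sum_le_card_nsmul _ _ 1
        fun j _ => le_of_eq (Polynomial.natDegree_X_sub_C _)) (by simp)
    have h2 : (∏ t ∈ Finset.range (k - i),
        (Polynomial.X + Polynomial.C ((t : ℝ) + 1 / 2))).natDegree ≤ k - i := by
      refine le_trans (Polynomial.natDegree_prod_le _ _) ?_
      refine le_trans (Finset.sum_le_card_nsmul _ _ 1
        fun j _ => le_of_eq (Polynomial.natDegree_X_add_C _)) (by simp)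
    refine le_trans (Polynomial.natDegree_mul_le) ?_
    rw [Polynomial.natDegree_C, zero_add]
    refine le_trans (Polynomial.natDegree_mul_le) ?_
    omega
  · intro L
    have heval : Polynomial.eval (L : ℝ) (∑ i ∈ Finset.range (k + 1), Polynomial.C (a i * r) *
        ((∏ j ∈ Finset.range i, (Polynomial.X - Polynomial.C (j : ℝ))) *
         (∏ t ∈ Finset.range (k - i), (Polynomial.X + Polynomial.C ((t : ℝ) + 1 / 2)))))
        = ∑ i ∈ Finset.range (k + 1), (a i * r) *
            ((∏ j ∈ Finset.range i, ((L : ℝ) - j)) *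
             (∏ t ∈ Finset.range (k - i), ((L : ℝ) + ((t : ℝ) + 1 / 2)))) := by
      rw [Polynomial.eval_finset_sum]
      refine Finset.sum_congr rfl fun i _ => ?_
      simp [Polynomial.eval_prod]
    rw [heval]
    show _ = cb L * _
    rw [Finset.mul_sum]
    have hsub : Finset.range (min L k + 1) ⊆ Finset.range (k + 1) :=
      Finset.range_subset_range.mpr (by omega)
    rw [← Finset.sum_subset hsub ?van]
    case van =>
      intro i hik hiL
      simp only [Finset.mem_range] at hik hiL
      have hLi : L < i := by omega
      have hz : (∏ j ∈ Finset.range i, ((L : ℝ) - j)) = 0 :=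
        Finset.prod_eq_zero (Finset.mem_range.2 hLi) (by simp)
      simp [hz]
    refine Finset.sum_congr rfl fun i hi => ?_
    simp only [Finset.mem_range] at hi
    have hiL : i ≤ L := by omega
    have hik : i ≤ k := by omega
    set m := L - i with hm
    have hmc : ((m : ℕ) : ℝ) = (L : ℝ) - i := by rw [hm, Nat.cast_sub hiL]
    have hmi : m + i = L := by omega
    rw [show (L : ℝ) - (i : ℝ) + (k : ℝ) + 1 / 2 = (m : ℝ) + (k : ℝ) + 1 / 2 by rw [hmc]]
    rw [gamma_shift k m, gamma_half m]
    have hsplit : ∏ j ∈ Finset.range k, ((m : ℝ) + j + 1 / 2)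
        = (∏ j ∈ Finset.range i, ((m : ℝ) + j + 1 / 2)) *
          ∏ t ∈ Finset.range (k - i), ((L : ℝ) + ((t : ℝ) + 1 / 2)) := by
      conv_lhs => rw [show k = i + (k - i) by omega]
      rw [Finset.prod_range_add]
      congr 1
      refine Finset.prod_congr rfl fun t _ => ?_
      push_cast
      rw [hmc]; ring
    have hprodL : ∏ j ∈ Finset.range i, ((m : ℝ) + j + 1)
        = ∏ j ∈ Finset.range i, ((L : ℝ) - j) := by
      rw [show (∏ j ∈ Finset.range i, ((m : ℝ) + j + 1))
          = ∏ j ∈ Finset.range i, ((L : ℝ) - (i : ℝ) + j + 1) from by rw [hmc]]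
      exact prod_shift (L : ℝ) i
    have hkey : cb m * ∏ j ∈ Finset.range k, ((m : ℝ) + j + 1 / 2)
        = cb L * ((∏ j ∈ Finset.range i, ((L : ℝ) - j)) *
            ∏ t ∈ Finset.range (k - i), ((L : ℝ) + ((t : ℝ) + 1 / 2))) := by
      rw [hsplit, ← mul_assoc, cb_key m i, hmi, hprodL]
      ring
    have hfac : (Nat.factorial m : ℝ) ≠ 0 := by positivity
    have hΓ : Real.Gamma ((k : ℝ) + 1 / 2) ≠ 0 := ne_of_gt hΓpos
    set G := Real.Gamma ((k : ℝ) + 1 / 2)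
    set sp := Real.sqrt Real.pi
    set p0 := ∏ j ∈ Finset.range k, ((m : ℝ) + j + 1 / 2)
    set p1 := ∏ j ∈ Finset.range i, ((L : ℝ) - j)
    set p2 := ∏ t ∈ Finset.range (k - i), ((L : ℝ) + ((t : ℝ) + 1 / 2))
    set F := (Nat.factorial m : ℝ)
    have expand : a i * (sp * cb m * F * p0) / (G * F) = a i * (sp / G) * (cb m * p0) := by
      field_simp
    rw [expand, hkey]
    ring
end

section
/- Let n ≥ 1, h = ⌈n/2⌉, r ≥ 1, and let 1 ≤ i₁ < i₂ < … < i_r ≤ h be integers. Then the number of words w : {1,…,n} → {1,2} such that for every t ∈ {1,…,r} one has w(i_t) = 1 and #{j < i_t : w(j) = 1} = ⌊i_t/2⌋ equals 2^{n − i_r} · binom(i₁ − 1, ⌊i₁/2⌋) · ∏_{t=2}^{r} binom(i_t − i_{t−1} − 1, ⌊i_t/2⌋ − ⌊i_{t−1}/2⌋ − 1). -/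
open Finset

/-- Binomial coefficient with integer arguments: `0` whenever `b < 0` or `b > a`. -/
def ichoose (a b : ℤ) : ℕ := if 0 ≤ b ∧ b ≤ a then Nat.choose a.toNat b.toNat else 0

/-- Given a previous index `prev` and the list of subsequent indices, the product
`∏_t binom(i_t − i_{t−1} − 1, ⌊i_t/2⌋ − ⌊i_{t−1}/2⌋ − 1)` over consecutive pairs. -/
def chainProd : ℕ → List ℕ → ℕ
  | _, [] => 1
  | prev, x :: xs =>
      ichoose ((x : ℤ) - (prev : ℤ) - 1) ((x : ℤ) / 2 - (prev : ℤ) / 2 - 1) * chainProd x xs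

/-- For the list of indices `[i₁, …, i_r]`, the product
`binom(i₁−1, ⌊i₁/2⌋) · ∏_{t=2}^{r} binom(i_t − i_{t−1} − 1, ⌊i_t/2⌋ − ⌊i_{t−1}/2⌋ − 1)`. -/
def tupleWeight : List ℕ → ℕ
  | [] => 1
  | x :: xs => ichoose ((x : ℤ) - 1) ((x : ℤ) / 2) * chainProd x xs

/-- Position `p` (1-based) is a correct pile-1 guess for the word `w : Fin n → Bool`
(`w j = true` meaning `w(j) = 1`): `w(p) = 1` and `#{j < p : w(j) = 1} = ⌊p/2⌋`. -/
abbrev correctPileOne (n : ℕ) (w : Fin n → Bool) (p : ℕ) : Prop :=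
  ∃ j : Fin n, j.val + 1 = p ∧ w j = true ∧
    (Finset.univ.filter (fun j' : Fin n => j'.val + 1 < p ∧ w j' = true)).card = p / 2

/-! ### Auxiliary definitions -/

def cntB (n : ℕ) (w : Fin n → Bool) (q : ℕ) : ℕ :=
  ∑ j : Fin n, if j.val < q ∧ w j = true then 1 else 0

def Ok (n p a : ℕ) (w : Fin n → Bool) : Prop :=
  ∃ j : Fin n, j.val = p ∧ w j = true ∧ cntB n w p = a

instance (n p a : ℕ) : DecidablePred (Ok n p a) := fun w => by unfold Ok; infer_instance

def Gnat : ℕ → ℕ → List (ℕ × ℕ) → ℕ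
  | _, _, [] => 1
  | p₀, a₀, x :: L => Nat.choose (x.1 - p₀ - 1) (x.2 - a₀ - 1) * Gnat x.1 x.2 L

def Fnat : List (ℕ × ℕ) → ℕ
  | [] => 1
  | x :: L => Nat.choose x.1 x.2 * Gnat x.1 x.2 L

def lastPos (L : List (ℕ × ℕ)) : ℕ := L.getLast?.elim 0 (fun x => x.1 + 1)

abbrev Rl : ℕ × ℕ → ℕ × ℕ → Prop := fun x y => x.1 < y.1 ∧ x.2 < y.2

/-! ### Splitting lemmas -/

lemma cntB_split (m k : ℕ) (w : Fin (m + k) → Bool) (q : ℕ) :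
    cntB (m + k) w q
      = cntB m (w ∘ Fin.castAdd k) q + cntB k (w ∘ Fin.natAdd m) (q - m) := by
  unfold cntB
  rw [Fin.sum_univ_add]
  have h1 : ∀ j : Fin m, (if (Fin.castAdd k j).val < q ∧ w (Fin.castAdd k j) = true then 1 else 0)
      = (if j.val < q ∧ (w ∘ Fin.castAdd k) j = true then 1 else 0) := fun j => rfl
  rw [Finset.sum_congr rfl fun j _ => h1 j]
  congr 1
  refine Finset.sum_congr rfl fun j _ => ?_
  have h2 : (Fin.natAdd m j).val < q ↔ j.val < q - m := by
    simp only [Fin.coe_natAdd]; omega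
  simp only [Function.comp_apply]
  exact if_congr (and_congr_left fun _ => h2) rfl rfl

lemma cntB_zero (n : ℕ) (w : Fin n → Bool) : cntB n w 0 = 0 := by
  unfold cntB; simp

def splitEquiv (m k : ℕ) : (Fin (m + k) → Bool) ≃ (Fin m → Bool) × (Fin k → Bool) where
  toFun := fun w => (w ∘ Fin.castAdd k, w ∘ Fin.natAdd m)
  invFun := fun p => Fin.addCases p.1 p.2
  left_inv := fun w => by
    funext i
    induction i using Fin.addCases with
    | left i => simp
    | right i => simp
  right_inv := fun p => by
    ext i <;> simp

lemma split_card {m k : ℕ} (P : (Fin m → Bool) → Prop) (Q : (Fin k → Bool) → Prop)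
    [DecidablePred P] [DecidablePred Q] :
    (univ.filter fun w : Fin (m + k) → Bool =>
        P (w ∘ Fin.castAdd k) ∧ Q (w ∘ Fin.natAdd m)).card
      = (univ.filter P).card * (univ.filter Q).card := by
  rw [← Fintype.card_subtype, ← Fintype.card_subtype, ← Fintype.card_subtype,
    ← Fintype.card_prod]
  exact Fintype.card_congr
    ((Equiv.subtypeEquiv (splitEquiv m k) fun w => Iff.rfl).trans Equiv.subtypeProdEquivProd)

/-! ### Basic counts -/

lemma cntB_all (m : ℕ) (v : Fin m → Bool) :
    cntB m v m = (univ.filter fun j => v j = true).card := by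
  rw [Finset.card_filter]
  exact Finset.sum_congr rfl fun j _ => by
    exact if_congr (and_iff_right j.isLt) rfl rfl

lemma card_cntAll (m a : ℕ) :
    (univ.filter fun v : Fin m → Bool => cntB m v m = a).card = m.choose a := by
  have hpc := Finset.card_powersetCard a (univ : Finset (Fin m))
  rw [Finset.card_univ, Fintype.card_fin] at hpc
  rw [← hpc]
  refine Finset.card_bij' (fun v _ => univ.filter fun j => v j = true)
    (fun s _ => fun j => decide (j ∈ s)) ?_ ?_ ?_ ?_
  · intro v hv
    simp only [Finset.mem_filter, Finset.mem_univ, true_and] at hv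
    simp only [Finset.mem_powersetCard]
    exact ⟨Finset.subset_univ _, by rw [← cntB_all]; exact hv⟩
  · intro s hs
    simp only [Finset.mem_powersetCard] at hs
    simp only [Finset.mem_filter, Finset.mem_univ, true_and]
    rw [cntB_all, ← hs.2]
    congr 1
    ext j
    simp
  · intro v hv
    funext j
    by_cases h : v j = true <;> simp [h]
  · intro s hs
    ext j
    simp

lemma card_head (p a : ℕ) :
    (univ.filter fun u : Fin (p+1) → Bool =>
        u (Fin.last p) = true ∧ cntB (p+1) u p = a).card = p.choose a := by
  have hrw : ∀ u : Fin (p+1) → Bool,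
      (u (Fin.last p) = true ∧ cntB (p+1) u p = a)
        ↔ ((cntB p (u ∘ Fin.castAdd 1) p = a) ∧ ((u ∘ Fin.natAdd p) 0 = true)) := by
    intro u
    have h1 : cntB (p+1) u p = cntB p (u ∘ Fin.castAdd 1) p := by
      rw [cntB_split p 1 u p]
      have h0 : p - p = 0 := by omega
      rw [h0, cntB_zero, Nat.add_zero]
    have h2 : Fin.last p = Fin.natAdd p (0 : Fin 1) := by
      apply Fin.ext; simp
    rw [h1, h2]
    tauto
  rw [Finset.filter_congr (fun u _ => hrw u)]
  rw [split_card (fun v : Fin p → Bool => cntB p v p = a)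
    (fun s : Fin 1 → Bool => s 0 = true)]
  rw [card_cntAll]
  have h1 : (univ.filter fun s : Fin 1 → Bool => s 0 = true).card = 1 := by decide
  rw [h1, mul_one]

/-! ### Chain lemmas -/

lemma chain_rel_all : ∀ {L : List (ℕ × ℕ)} {x : ℕ × ℕ},
    List.Chain Rl x L → ∀ y ∈ L, Rl x y := by
  intro L
  induction L with
  | nil => intro x _ y hy; simp at hy
  | cons z L ih =>
    intro x h y hy
    rcases List.chain_cons.mp h with ⟨hxz, hz⟩
    rcases List.mem_cons.mp hy with rfl | hy'
    · exact hxz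
    · have := ih hz y hy'
      exact ⟨hxz.1.trans this.1, hxz.2.trans this.2⟩

lemma chain_shift (p a : ℕ) : ∀ (L : List (ℕ × ℕ)), List.Chain' Rl L →
    (∀ x ∈ L, p < x.1 ∧ a < x.2) →
    List.Chain' Rl (L.map fun y' => (y'.1 - (p+1), y'.2 - (a+1))) := by
  intro L
  induction L with
  | nil => intro _ _; exact List.isChain_nil
  | cons x L ih =>
    intro h hb
    cases L with
    | nil => exact List.isChain_singleton _
    | cons y L' =>
      rcases List.isChain_cons_cons.mp h with ⟨hxy, h'⟩
      have hbx := hb x (by simp)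
      refine List.isChain_cons_cons.mpr ⟨⟨?_, ?_⟩, ih h' (fun z hz => hb z (by simp [hz]))⟩ <;>
        dsimp only <;> omega

lemma Gnat_sub : ∀ (l : List (ℕ × ℕ)) (q b s t : ℕ), List.Chain Rl (q, b) l →
    s ≤ q → t ≤ b →
    Gnat (q - s) (b - t) (l.map fun x => (x.1 - s, x.2 - t)) = Gnat q b l := by
  intro l
  induction l with
  | nil => intro q b s t _ _ _; rfl
  | cons x rest ih =>
    intro q b s t hch hs ht
    rcases List.chain_cons.mp hch with ⟨hr, hch'⟩
    simp only [List.map_cons, Gnat]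
    rw [ih x.1 x.2 s t hch' (by omega) (by omega)]
    congr 1
    congr 1 <;> omega

lemma Gnat_shift (p a : ℕ) (L : List (ℕ × ℕ)) (h : List.Chain Rl (p, a) L) :
    Gnat p a L = Fnat (L.map fun y' => (y'.1 - (p+1), y'.2 - (a+1))) := by
  cases L with
  | nil => rfl
  | cons x rest =>
    rcases List.chain_cons.mp h with ⟨hr, hch'⟩
    simp only [List.map_cons, Gnat, Fnat]
    rw [Gnat_sub rest x.1 x.2 (p+1) (a+1) hch' (by omega) (by omega)]
    congr 2 <;> omega

lemma lastPos_cons_cons (x y : ℕ × ℕ) (L : List (ℕ × ℕ)) :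
    lastPos (x :: y :: L) = lastPos (y :: L) := by
  unfold lastPos
  rw [List.getLast?_eq_getLast (l := x :: y :: L) (by simp), List.getLast?_eq_getLast (l := y :: L) (by simp),
    List.getLast_cons (by simp)]

lemma lastPos_map_shift (p a : ℕ) (x : ℕ × ℕ) (L : List (ℕ × ℕ))
    (h : ∀ y ∈ x :: L, p < y.1) :
    lastPos ((x :: L).map fun y => (y.1 - (p+1), y.2 - (a+1))) = lastPos (x :: L) - (p+1) := by
  unfold lastPos
  rw [List.getLast?_map, List.getLast?_eq_getLast (l := x :: L) (by simp)]
  simp only [Option.map_some, Option.elim]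
  have := h _ (List.getLast_mem (l := x :: L) (by simp))
  omega

lemma lastPos_le (L : List (ℕ × ℕ)) (n : ℕ) (h : ∀ x ∈ L, x.1 < n) : lastPos L ≤ n := by
  unfold lastPos
  cases hL : L.getLast? with
  | none => simp
  | some x =>
    obtain ⟨hne, rfl⟩ := List.mem_getLast?_eq_getLast (by rw [hL]; exact rfl)
    have := h _ (List.getLast_mem hne)
    simp only [hL, Option.elim] at *
    omega

/-! ### cntB saturation -/

lemma cntB_full (p q : ℕ) (hq : p + 1 ≤ q) (u : Fin (p+1) → Bool)
    (hu : u (Fin.last p) = true) :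
    cntB (p+1) u q = cntB (p+1) u p + 1 := by
  unfold cntB
  rw [Fin.sum_univ_castSucc, Fin.sum_univ_castSucc]
  have h1 : (if (Fin.last p).val < q ∧ u (Fin.last p) = true then 1 else 0) = 1 := by
    rw [if_pos ⟨by simp; omega, hu⟩]
  have h2 : (if (Fin.last p).val < p ∧ u (Fin.last p) = true then 1 else 0) = 0 := by
    rw [if_neg]; simp
  rw [h1, h2]
  have h3 : ∀ j : Fin p, (if (Fin.castSucc j).val < q ∧ u (Fin.castSucc j) = true then 1 else 0)
      = (if (Fin.castSucc j).val < p ∧ u (Fin.castSucc j) = true then 1 else 0) := by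
    intro j
    refine if_congr (and_congr_left fun _ => ?_) rfl rfl
    have hj : (Fin.castSucc j).val = j.val := rfl
    rw [hj]
    constructor <;> intro <;> [exact j.isLt; omega]
  rw [Finset.sum_congr rfl fun j _ => h3 j]

lemma card_nil (n : ℕ) :
    (univ.filter fun w : Fin n → Bool => ∀ x ∈ ([] : List (ℕ × ℕ)), Ok n x.1 x.2 w).card
      = 2 ^ n := by
  rw [Finset.filter_true_of_mem (fun w _ => by simp)]
  rw [Finset.card_univ]
  simp

/-! ### Main counting lemma -/

lemma main_count : ∀ (N : ℕ) (L : List (ℕ × ℕ)), L.length ≤ N → ∀ (n : ℕ),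
    List.Chain' Rl L → (∀ x ∈ L, x.1 < n) →
    (univ.filter fun w : Fin n → Bool => ∀ x ∈ L, Ok n x.1 x.2 w).card
      = 2 ^ (n - lastPos L) * Fnat L := by
  intro N
  induction N with
  | zero =>
    intro L hN n _ _
    have hL : L = [] := List.eq_nil_of_length_eq_zero (Nat.le_zero.mp hN)
    subst hL
    rw [card_nil]
    simp [lastPos, Fnat]
  | succ N ih =>
    intro L hN n hc hlt
    match L with
    | [] =>
      rw [card_nil]
      simp [lastPos, Fnat]
    | (p, a) :: L' =>
      have hpn : p < n := hlt (p, a) (by simp)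
      obtain ⟨k, rfl⟩ : ∃ k, n = (p + 1) + k := ⟨n - (p + 1), by omega⟩
      have hch : List.Chain Rl (p, a) L' := hc
      have hc' : List.Chain' Rl L' := hc.tail
      have hall := chain_rel_all hch
      set L'' := L'.map (fun y' => (y'.1 - (p+1), y'.2 - (a+1))) with hL''
      have key : ∀ w : Fin ((p+1)+k) → Bool,
          (∀ x ∈ (p, a) :: L', Ok ((p+1)+k) x.1 x.2 w)
            ↔ (((w ∘ Fin.castAdd k) (Fin.last p) = true
                  ∧ cntB (p+1) (w ∘ Fin.castAdd k) p = a)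
               ∧ (∀ x ∈ L'', Ok k x.1 x.2 (w ∘ Fin.natAdd (p+1)))) := by
        intro w
        set u := w ∘ Fin.castAdd k with hu
        set v := w ∘ Fin.natAdd (p+1) with hv
        have hcnthead : cntB ((p+1)+k) w p = cntB (p+1) u p := by
          rw [cntB_split (p+1) k w p]
          have h0 : p - (p+1) = 0 := by omega
          rw [h0, cntB_zero, Nat.add_zero]
        have headiff : Ok ((p+1)+k) p a w ↔ (u (Fin.last p) = true ∧ cntB (p+1) u p = a) := by
          constructor
          · rintro ⟨j, hj, hjw, hjc⟩
            have hje : j = Fin.castAdd k (Fin.last p) := by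
              apply Fin.ext; simp [hj]
            rw [hje] at hjw
            exact ⟨hjw, by rw [← hcnthead]; exact hjc⟩
          · rintro ⟨h1, h2⟩
            exact ⟨Fin.castAdd k (Fin.last p), by simp, h1, by rw [hcnthead]; exact h2⟩
        have tailcnt : ∀ (h1 : u (Fin.last p) = true) (h2 : cntB (p+1) u p = a) (q : ℕ),
            p + 1 ≤ q → cntB ((p+1)+k) w q = (a + 1) + cntB k v (q - (p+1)) := by
          intro h1 h2 q hq
          rw [cntB_split (p+1) k w q, cntB_full p q hq u h1, h2]
        have tailiff : ∀ (h1 : u (Fin.last p) = true) (h2 : cntB (p+1) u p = a)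
            (q b : ℕ), p < q → a < b → q < (p+1)+k →
            (Ok ((p+1)+k) q b w ↔ Ok k (q - (p+1)) (b - (a+1)) v) := by
          intro h1 h2 q b hpq hab hqn
          constructor
          · rintro ⟨j, hj, hjw, hjc⟩
            refine ⟨⟨q - (p+1), by omega⟩, rfl, ?_, ?_⟩
            · have hje : j = Fin.natAdd (p+1) ⟨q - (p+1), by omega⟩ := by
                apply Fin.ext; simp [hj]; omega
              rw [hje] at hjw
              exact hjw
            · rw [tailcnt h1 h2 q (by omega)] at hjc
              omega
          · rintro ⟨j, hj, hjw, hjc⟩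
            refine ⟨Fin.natAdd (p+1) j, by simp [hj]; omega, hjw, ?_⟩
            rw [tailcnt h1 h2 q (by omega)]
            omega
        constructor
        · intro hw
          have hhead := headiff.mp (hw (p, a) (by simp))
          refine ⟨hhead, ?_⟩
          intro x hx
          rw [hL''] at hx
          rcases List.mem_map.mp hx with ⟨y, hy, rfl⟩
          have hrel := hall y hy
          have hyn := hlt y (by simp [hy])
          exact (tailiff hhead.1 hhead.2 y.1 y.2 hrel.1 hrel.2 hyn).mp (hw y (by simp [hy]))
        · rintro ⟨hhead, htail⟩
          intro x hx
          rcases List.mem_cons.mp hx with rfl | hx'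
          · exact headiff.mpr hhead
          · have hrel := hall x hx'
            have hxn := hlt x (by simp [hx'])
            refine (tailiff hhead.1 hhead.2 x.1 x.2 hrel.1 hrel.2 hxn).mpr ?_
            refine htail (x.1 - (p + 1), x.2 - (a + 1)) ?_
            rw [hL'']
            exact List.mem_map.mpr ⟨x, hx', rfl⟩
      rw [Finset.filter_congr (fun w _ => key w)]
      rw [split_card (fun u : Fin (p+1) → Bool => u (Fin.last p) = true ∧ cntB (p+1) u p = a)
        (fun v : Fin k → Bool => ∀ x ∈ L'', Ok k x.1 x.2 v)]
      rw [card_head]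
      have hlen : L''.length ≤ N := by
        rw [hL'', List.length_map]
        have := hN
        simp only [List.length_cons] at this
        omega
      have hbnd : ∀ x ∈ L'', x.1 < k := by
        intro x hx
        rw [hL''] at hx
        rcases List.mem_map.mp hx with ⟨y, hy, rfl⟩
        have h1 := (hall y hy).1
        have h2 := hlt y (by simp [hy])
        dsimp only
        omega
      rw [ih _ hlen k
        (by rw [hL'']; exact chain_shift p a L' hc' (fun z hz => hall z hz)) hbnd]
      -- now pure arithmetic
      cases L' with
      | nil =>
        rw [hL'']
        simp only [List.map_nil]
        have e1 : lastPos [(p, a)] = p + 1 := rfl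
        have e2 : lastPos ([] : List (ℕ × ℕ)) = 0 := rfl
        have e3 : Fnat [(p, a)] = p.choose a := by simp [Fnat, Gnat]
        have e4 : Fnat ([] : List (ℕ × ℕ)) = 1 := rfl
        rw [e1, e2, e3, e4]
        have e5 : (p+1)+k - (p+1) = k := by omega
        rw [e5, Nat.sub_zero, mul_one]
        ring
      | cons x rest =>
        rw [hL'']
        have hlast : lastPos ((x :: rest).map fun y => (y.1 - (p+1), y.2 - (a+1)))
            = lastPos (x :: rest) - (p+1) :=
          lastPos_map_shift p a x rest (fun y hy => (hall y hy).1)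
        have hge : p + 1 ≤ lastPos (x :: rest) := by
          unfold lastPos
          rw [List.getLast?_eq_getLast (l := x :: rest) (by simp)]
          have := (hall _ (List.getLast_mem (l := x :: rest) (by simp))).1
          simp only [Option.elim]
          omega
        have hle : lastPos (x :: rest) ≤ (p+1) + k :=
          lastPos_le _ _ (fun y hy => hlt y (by simp [hy]))
        rw [hlast, lastPos_cons_cons]
        have hexp : (p + 1) + k - lastPos (x :: rest) = k - (lastPos (x :: rest) - (p+1)) := by
          omega
        rw [hexp]
        have hFn : Fnat ((p, a) :: x :: rest) = p.choose a * Gnat p a (x :: rest) := rfl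
        rw [hFn, Gnat_shift p a (x :: rest) hch]
        ring

/-! ### Glue: ichoose vs Nat.choose -/

lemma ichoose_nat (a b : ℕ) : ichoose (a : ℤ) (b : ℤ) = a.choose b := by
  unfold ichoose
  by_cases h : (b : ℤ) ≤ (a : ℤ)
  · rw [if_pos ⟨Int.ofNat_nonneg b, h⟩, Int.toNat_natCast, Int.toNat_natCast]
  · rw [if_neg (fun hc => h hc.2)]
    have : a < b := by omega
    exact (Nat.choose_eq_zero_of_lt this).symm

lemma ichoose_neg (a b : ℤ) (h : b < 0) : ichoose a b = 0 := by
  unfold ichoose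
  rw [if_neg (fun hc => by omega)]

lemma cntB_card (n : ℕ) (w : Fin n → Bool) (q : ℕ) :
    cntB n w q = (univ.filter fun j : Fin n => j.val < q ∧ w j = true).card :=
  (Finset.card_filter _ _).symm

lemma no_two (n p a q b : ℕ) (w : Fin n → Bool) (hpq : p < q) (hba : b ≤ a)
    (h1 : Ok n p a w) (h2 : Ok n q b w) : False := by
  obtain ⟨j, hj, hjw, hjc⟩ := h1
  obtain ⟨j', hj', hj'w, hj'c⟩ := h2
  rw [cntB_card] at hjc hj'c
  have hsub : insert j (univ.filter fun i : Fin n => i.val < p ∧ w i = true)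
      ⊆ (univ.filter fun i : Fin n => i.val < q ∧ w i = true) := by
    intro i hi
    rcases Finset.mem_insert.mp hi with rfl | hi'
    · simp only [Finset.mem_filter, Finset.mem_univ, true_and]
      exact ⟨by omega, hjw⟩
    · simp only [Finset.mem_filter, Finset.mem_univ, true_and] at hi' ⊢
      exact ⟨by omega, hi'.2⟩
  have hcard := Finset.card_le_card hsub
  rw [Finset.card_insert_of_notMem (by simp [hj])] at hcard
  omega

/-! ### chainProd lemmas -/

lemma chainProd_zero : ∀ (l : List ℕ) (x : ℕ),
    ¬ List.Chain (fun u v : ℕ => u / 2 < v / 2) x l → chainProd x l = 0 := by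
  intro l
  induction l with
  | nil => intro x h; exact absurd List.Chain.nil h
  | cons y ys ih =>
    intro x h
    rw [List.Chain, List.isChain_cons_cons] at h
    push_neg at h
    by_cases h1 : x / 2 < y / 2
    · have := ih y (h h1)
      unfold chainProd
      rw [this, mul_zero]
    · unfold chainProd
      have hneg : (y : ℤ) / 2 - (x : ℤ) / 2 - 1 < 0 := by omega
      rw [ichoose_neg _ _ hneg, zero_mul]

lemma chainProd_eq : ∀ (l : List ℕ) (x : ℕ), 1 ≤ x → (∀ y ∈ l, 1 ≤ y) →
    List.Chain (· < ·) x l → List.Chain (fun u v : ℕ => u / 2 < v / 2) x l →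
    chainProd x l = Gnat (x - 1) (x / 2) (l.map fun y => (y - 1, y / 2)) := by
  intro l
  induction l with
  | nil => intro x _ _ _ _; rfl
  | cons y ys ih =>
    intro x hx hall hch hh
    rcases List.chain_cons.mp hch with ⟨hxy, hch'⟩
    rcases List.chain_cons.mp hh with ⟨hxy2, hh'⟩
    have hy : 1 ≤ y := hall y (by simp)
    unfold chainProd
    simp only [List.map_cons, Gnat]
    rw [ih y hy (fun z hz => hall z (by simp [hz])) hch' hh']
    congr 1
    have e1 : ((y : ℤ) - (x : ℤ) - 1) = ((y - x - 1 : ℕ) : ℤ) := by omega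
    have e2 : ((y : ℤ) / 2 - (x : ℤ) / 2 - 1) = ((y / 2 - x / 2 - 1 : ℕ) : ℤ) := by omega
    rw [e1, e2, ichoose_nat]
    congr 1 <;> omega

lemma tupleWeight_eq (l : List ℕ) (h1 : ∀ y ∈ l, 1 ≤ y)
    (hch : List.Chain' (· < ·) l) (hh : List.Chain' (fun u v : ℕ => u / 2 < v / 2) l) :
    tupleWeight l = Fnat (l.map fun y => (y - 1, y / 2)) := by
  cases l with
  | nil => rfl
  | cons x ys =>
    have hx : 1 ≤ x := h1 x (by simp)
    unfold tupleWeight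
    simp only [List.map_cons, Fnat]
    rw [chainProd_eq ys x hx (fun z hz => h1 z (by simp [hz])) hch hh]
    congr 1
    have e1 : ((x : ℤ) - 1) = ((x - 1 : ℕ) : ℤ) := by omega
    have e2 : ((x : ℤ) / 2) = ((x / 2 : ℕ) : ℤ) := by omega
    rw [e1, e2, ichoose_nat]

/-! ### correctPileOne vs Ok -/

lemma correct_iff_Ok (n y : ℕ) (hy : 1 ≤ y) (w : Fin n → Bool) :
    correctPileOne n w y ↔ Ok n (y - 1) (y / 2) w := by
  have hfilt : (univ.filter fun j' : Fin n => j'.val + 1 < y ∧ w j' = true)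
      = (univ.filter fun j' : Fin n => j'.val < y - 1 ∧ w j' = true) := by
    apply Finset.filter_congr
    intro j' _
    exact and_congr_left fun _ => by omega
  constructor
  · rintro ⟨j, hj, hjw, hjc⟩
    refine ⟨j, by omega, hjw, ?_⟩
    rw [cntB_card, ← hfilt]
    exact hjc
  · rintro ⟨j, hj, hjw, hjc⟩
    refine ⟨j, by omega, hjw, ?_⟩
    rw [hfilt]
    rw [cntB_card] at hjc
    exact hjc

lemma chain_map_pair : ∀ (l : List ℕ), (∀ y ∈ l, 1 ≤ y) → List.Chain' (· < ·) l →
    List.Chain' (fun u v : ℕ => u / 2 < v / 2) l →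
    List.Chain' Rl (l.map fun y => (y - 1, y / 2)) := by
  intro l
  induction l with
  | nil => intro _ _ _; exact List.isChain_nil
  | cons x ys ih =>
    intro hb h1 h2
    cases ys with
    | nil => exact List.isChain_singleton _
    | cons y L' =>
      rcases List.isChain_cons_cons.mp h1 with ⟨ha, h1'⟩
      rcases List.isChain_cons_cons.mp h2 with ⟨hb2, h2'⟩
      have hx1 := hb x (by simp)
      refine List.isChain_cons_cons.mpr
        ⟨⟨?_, ?_⟩, ih (fun z hz => hb z (by simp [hz])) h1' h2'⟩ <;> dsimp only <;> omega

theorem count_words_correct_at_positions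
    (n : ℕ) (hn : 1 ≤ n) (r : ℕ) (hr : 1 ≤ r) (c : Fin r → ℕ)
    (hmono : StrictMono c) (hlow : ∀ t, 1 ≤ c t) (hhigh : ∀ t, c t ≤ (n + 1) / 2) :
    (Finset.univ.filter
        (fun w : Fin n → Bool => ∀ t : Fin r, correctPileOne n w (c t))).card =
      2 ^ (n - (List.ofFn c).getLastD 0) * tupleWeight (List.ofFn c) := by
  classical
  set l := List.ofFn c with hl
  have hlne : l ≠ [] := by
    rw [hl]
    intro hcon
    have := congrArg List.length hcon
    rw [List.length_ofFn] at this
    simp at this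
    omega
  have hmem : ∀ y ∈ l, 1 ≤ y ∧ y ≤ (n + 1) / 2 := by
    intro y hy
    rw [hl] at hy
    obtain ⟨t, rfl⟩ := List.mem_ofFn.mp hy
    exact ⟨hlow t, hhigh t⟩
  have hchlt : List.Chain' (· < ·) l := by
    rw [List.Chain', List.isChain_iff_getElem]
    intro i hi
    rw [List.getElem_ofFn, List.getElem_ofFn]
    apply hmono
    simp [Fin.lt_def]
  set L := l.map (fun y => (y - 1, y / 2)) with hL
  have hpred : ∀ w : Fin n → Bool,
      (∀ t : Fin r, correctPileOne n w (c t)) ↔ (∀ x ∈ L, Ok n x.1 x.2 w) := by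
    intro w
    constructor
    · intro h x hx
      rw [hL] at hx
      rcases List.mem_map.mp hx with ⟨y, hy, rfl⟩
      rw [hl] at hy
      obtain ⟨t, rfl⟩ := List.mem_ofFn.mp hy
      exact (correct_iff_Ok n (c t) (hlow t) w).mp (h t)
    · intro h t
      refine (correct_iff_Ok n (c t) (hlow t) w).mpr ?_
      refine h (c t - 1, c t / 2) ?_
      rw [hL]
      refine List.mem_map.mpr ⟨c t, ?_, rfl⟩
      rw [hl]
      exact List.mem_ofFn.mpr ⟨t, rfl⟩
  rw [Finset.filter_congr (fun w _ => hpred w)]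
  by_cases H : List.Chain' (fun u v : ℕ => u / 2 < v / 2) l
  · have hchainL : List.Chain' Rl L := by
      rw [hL]
      exact chain_map_pair l (fun y hy => (hmem y hy).1) hchlt H
    have hbnd : ∀ x ∈ L, x.1 < n := by
      intro x hx
      rw [hL] at hx
      rcases List.mem_map.mp hx with ⟨y, hy, rfl⟩
      have := hmem y hy
      dsimp only
      omega
    rw [main_count L.length L le_rfl n hchainL hbnd]
    have hlast : lastPos L = l.getLastD 0 := by
      rw [hL]
      unfold lastPos
      rw [List.getLast?_map, List.getLast?_eq_getLast (l := l) hlne, List.getLastD_eq_getLast?,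
        List.getLast?_eq_getLast (l := l) hlne]
      simp only [Option.map_some, Option.elim, Option.getD]
      have : 1 ≤ l.getLast hlne := (hmem _ (List.getLast_mem hlne)).1
      omega
    rw [hlast]
    congr 1
    rw [hL]
    exact (tupleWeight_eq l (fun y hy => (hmem y hy).1) hchlt H).symm
  · have hzero : tupleWeight l = 0 := by
      cases hc : l with
      | nil => exact absurd hc hlne
      | cons x ys =>
        rw [hc] at H
        have H' : ¬ List.Chain (fun u v : ℕ => u / 2 < v / 2) x ys := H
        rw [show tupleWeight (x :: ys)
            = ichoose ((x : ℤ) - 1) ((x : ℤ) / 2) * chainProd x ys from rfl]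
        rw [chainProd_zero ys x H', mul_zero]
    rw [hzero, mul_zero]
    rw [Finset.card_eq_zero, Finset.filter_eq_empty_iff]
    intro w _
    rw [List.Chain', List.isChain_iff_getElem] at H
    push_neg at H
    obtain ⟨i, hi, hbad⟩ := H
    intro hw
    have hglt : l.get ⟨i, by omega⟩ < l.get ⟨i + 1, by omega⟩ := by
      rw [List.Chain', List.isChain_iff_getElem] at hchlt
      exact hchlt i hi
    have hg1 : 1 ≤ l.get ⟨i, by omega⟩ := (hmem _ (l.get_mem _)).1
    have h1 : Ok n (l.get ⟨i, by omega⟩ - 1) (l.get ⟨i, by omega⟩ / 2) w := by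
      refine hw (l.get ⟨i, by omega⟩ - 1, l.get ⟨i, by omega⟩ / 2) ?_
      rw [hL]
      exact List.mem_map.mpr ⟨_, l.get_mem _, rfl⟩
    have h2 : Ok n (l.get ⟨i + 1, by omega⟩ - 1) (l.get ⟨i + 1, by omega⟩ / 2) w := by
      refine hw (l.get ⟨i + 1, by omega⟩ - 1, l.get ⟨i + 1, by omega⟩ / 2) ?_
      rw [hL]
      exact List.mem_map.mpr ⟨_, l.get_mem _, rfl⟩
    exact no_two n _ _ _ _ w (by omega) (by omega) h1 h2
end

section
/- For every integer L ≥ 1: Σ_{i=1}^{2L} binom(i−1, ⌊i/2⌋) · (1/2^i) = (2L + 1/2) · binom(2L, L) / 4^L − 1/2. -/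
open Finset

theorem sum_even_half_deck (L : ℕ) (hL : 1 ≤ L) :
    ∑ i ∈ Finset.Icc 1 (2 * L), (Nat.choose (i - 1) (i / 2) : ℝ) * (1 / 2 ^ i) =
      (2 * (L : ℝ) + 1 / 2) * (Nat.choose (2 * L) L : ℝ) / 4 ^ L - 1 / 2 := by
  induction L, hL using Nat.le_induction with
  | base =>
    rw [show 2 * 1 = 2 from rfl, show Finset.Icc 1 2 = {1, 2} from rfl]
    norm_num [Nat.choose]
  | succ n hn ih =>
    have e1 : (2 * n + 1) / 2 = n := by omega
    have e2 : (2 * n + 1 + 1) / 2 = n + 1 := by omega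
    have hsymm : (2 * n + 1).choose n = (2 * n + 1).choose (n + 1) := by
      have := Nat.choose_symm (n := 2 * n + 1) (k := n + 1) (by omega)
      simpa [show 2 * n + 1 - (n + 1) = n from by omega] using this
    have hc2 : (2 * n + 2).choose (n + 1) = 2 * (2 * n + 1).choose (n + 1) := by
      rw [show 2 * n + 2 = (2 * n + 1) + 1 from rfl, Nat.choose_succ_succ, hsymm]
      ring
    have hc1 : (2 * n + 1) * (2 * n).choose n = (2 * n + 1).choose (n + 1) * (n + 1) := by
      simpa using Nat.add_one_mul_choose_eq (2 * n) n
    have hc1R : ((2 * n + 1 : ℕ) : ℝ) * ((2 * n).choose n : ℝ)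
        = ((2 * n + 1).choose (n + 1) : ℝ) * ((n + 1 : ℕ) : ℝ) := by
      exact_mod_cast congrArg (Nat.cast : ℕ → ℝ) hc1
    rw [show 2 * (n + 1) = (2 * n + 1) + 1 from by ring,
      Finset.sum_Icc_succ_top (by omega), Finset.sum_Icc_succ_top (by omega), ih,
      show 2 * n + 1 - 1 = 2 * n from rfl, e1,
      show 2 * n + 1 + 1 - 1 = 2 * n + 1 from rfl, e2,
      show 2 * n + 1 + 1 = 2 * n + 2 from rfl, hc2]
    push_cast [hc2] at hc1R ⊢
    have h4 : (4 : ℝ) ^ n ≠ 0 := by positivity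
    have h2 : (2 : ℝ) ^ (2 * n + 1) ≠ 0 := by positivity
    have hx : ((2 * n).choose n : ℝ) = ((2 * n + 1).choose (n + 1) : ℝ) * (n + 1) / (2 * n + 1) := by
      field_simp
      linarith [hc1R]
    rw [hx]
    have h2n1 : (2 * (n : ℝ) + 1) ≠ 0 := by positivity
    have hpow : (4 : ℝ) ^ n = 2 ^ (2 * n) := by
      rw [pow_mul]; norm_num
    rw [show ((4:ℝ)) ^ (n+1) = 4 * 2 ^ (2*n) from by rw [pow_succ, hpow]; ring, hpow]
    field_simp
    ring
end

section
/- For every integer L ≥ 1: Σ_{i=1}^{2L−1} binom(i−1, ⌊i/2⌋) · (1/2^i) = 2L · binom(2L, L) / 4^L − 1/2. -/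
open Finset
lemma choose_half_aux (k : ℕ) :
    2 * Nat.choose (2 * k + 1) (k + 1) = Nat.choose (2 * k + 2) (k + 1) := by
  have h : Nat.choose (2 * k + 1) k = Nat.choose (2 * k + 1) (k + 1) := by
    have := Nat.choose_symm (n := 2 * k + 1) (k := k + 1) (by omega)
    simpa [show 2 * k + 1 - (k + 1) = k by omega] using this
  conv_rhs => rw [show 2 * k + 2 = (2 * k + 1) + 1 from rfl, Nat.choose_succ_succ]
  rw [h]; ring

lemma choose_central_succ (L : ℕ) :
    (L + 1) * Nat.choose (2 * L + 2) (L + 1) = 2 * (2 * L + 1) * Nat.choose (2 * L) L := by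
  have h1 := Nat.add_one_mul_choose_eq (2 * L + 1) L
  have h2 := Nat.add_one_mul_choose_eq (2 * L) L
  have h3 : Nat.choose (2 * L + 1) L = Nat.choose (2 * L + 1) (L + 1) := by
    have := Nat.choose_symm (n := 2 * L + 1) (k := L + 1) (by omega)
    simpa [show 2 * L + 1 - (L + 1) = L by omega] using this
  simp only [show 2 * L + 1 + 1 = 2 * L + 2 by omega] at h1
  nlinarith [h1, h2, h3]

theorem sum_odd_half_deck (L : ℕ) (hL : 1 ≤ L) :
    ∑ i ∈ Finset.Icc 1 (2 * L - 1), (Nat.choose (i - 1) (i / 2) : ℝ) * (1 / 2 ^ i) =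
      2 * (L : ℝ) * (Nat.choose (2 * L) L : ℝ) / 4 ^ L - 1 / 2 := by
  induction L, hL using Nat.le_induction with
  | base => norm_num
  | succ L hL ih =>
    have e1 : 2 * (L + 1) - 1 = (2 * L) + 1 := by omega
    have e2 : 2 * L = (2 * L - 1) + 1 := by omega
    rw [e1, Finset.sum_Icc_succ_top (by omega), e2, Finset.sum_Icc_succ_top (by omega), ← e2, ih]
    have d1 : (2 * L + 1) / 2 = L := by omega
    have d2 : (2 * L) / 2 = L := by omega
    have d3 : 2 * L + 1 - 1 = 2 * L := by omega
    have d4 : 2 * L - 1 + 1 = 2 * L := by omega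
    rw [d1, d3, d2]
    -- cast key identities
    have k1 : (Nat.choose (2 * L) L : ℝ) = 2 * (Nat.choose (2 * L - 1) L : ℝ) := by
      have hh : 2 * Nat.choose (2 * L - 1) L = Nat.choose (2 * L) L := by
        obtain ⟨k, rfl⟩ := Nat.exists_eq_add_of_le hL
        have : 2 * (1 + k) - 1 = 2 * k + 1 := by omega
        rw [this, show 2 * (1 + k) = 2 * k + 2 by ring, show 1 + k = k + 1 by ring]
        exact choose_half_aux k
      exact_mod_cast hh.symm
    have k2 : ((L : ℝ) + 1) * (Nat.choose (2 * (L + 1)) (L + 1) : ℝ) =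
        2 * (2 * (L : ℝ) + 1) * (Nat.choose (2 * L) L : ℝ) := by
      have := choose_central_succ L
      rw [show 2 * (L + 1) = 2 * L + 2 by ring]
      exact_mod_cast this
    have hp : (2 : ℝ) ^ (2 * L) = 4 ^ L := by
      rw [pow_mul]; norm_num
    have hp1 : (2 : ℝ) ^ (2 * L + 1) = 2 * 4 ^ L := by
      rw [pow_succ, hp]; ring
    have h4 : (4 : ℝ) ^ L ≠ 0 := by positivity
    push_cast
    rw [hp, hp1, show (4:ℝ)^(L+1) = 4 * 4^L from by ring]
    linear_combination (-1 / (2 * (4:ℝ)^L)) * k2 + (-1 / (2 * (4:ℝ)^L)) * k1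
end

section
/- For every real y with 0 ≤ y < 1, the series Σ_{L=0}^{∞} ( Σ_{i=1}^{2L} binom(i−1, ⌊i/2⌋) · (1/2^i) ) y^L converges and equals (y + 1) / ( 2(1−y)^{3/2} ) − 1 / ( 2(1−y) ). -/
open Finset

noncomputable def bb (n : ℕ) : ℝ := (Nat.centralBinom n : ℝ) / 4 ^ n

lemma centralBinom_le_four_pow (n : ℕ) : Nat.centralBinom n ≤ 4 ^ n := by
  calc Nat.centralBinom n = (2*n).choose n := rfl
  _ ≤ ∑ i ∈ Finset.range (2*n+1), (2*n).choose i :=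
      Finset.single_le_sum (fun i _ => Nat.zero_le _) (by simp; omega)
  _ = 2 ^ (2*n) := Nat.sum_range_choose (2*n)
  _ = 4 ^ n := by rw [pow_mul]; norm_num

lemma bb_nonneg (n : ℕ) : 0 ≤ bb n := by rw [bb]; positivity

lemma bb_le_one (n : ℕ) : bb n ≤ 1 := by
  rw [bb, div_le_one (by positivity)]
  exact_mod_cast centralBinom_le_four_pow n

lemma desc_smeval_neg_half (n : ℕ) :
    Polynomial.smeval (descPochhammer ℤ n) (-(1/2) : ℝ) =
      (n.factorial : ℝ) * (-(1/4))^n * Nat.centralBinom n := by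
  induction n with
  | zero => simp [descPochhammer_zero, Polynomial.smeval_one]
  | succ n ih =>
    rw [descPochhammer_succ_right, Polynomial.smeval_mul, ih, Polynomial.smeval_sub,
      Polynomial.smeval_X, Polynomial.smeval_natCast]
    have key : ((n:ℝ) + 1) * Nat.centralBinom (n+1) = 2 * (2*(n:ℝ)+1) * Nat.centralBinom n := by
      exact_mod_cast Nat.succ_mul_centralBinom_succ n
    rw [Nat.factorial_succ]
    push_cast
    linear_combination ((n.factorial : ℝ) * (-(1/4))^n / 4) * key

lemma desc_smeval_neg_one (n : ℕ) :
    Polynomial.smeval (descPochhammer ℤ n) (-1 : ℝ) = (-1)^n * (n.factorial : ℝ) := by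
  induction n with
  | zero => simp [descPochhammer_zero, Polynomial.smeval_one]
  | succ n ih =>
    rw [descPochhammer_succ_right, Polynomial.smeval_mul, ih, Polynomial.smeval_sub,
      Polynomial.smeval_X, Polynomial.smeval_natCast, Nat.factorial_succ]
    push_cast
    ring

lemma ringChoose_neg_half (n : ℕ) :
    Ring.choose (-(1/2) : ℝ) n = (-(1/4))^n * Nat.centralBinom n := by
  have h := Ring.descPochhammer_eq_factorial_smul_choose (-(1/2) : ℝ) n
  rw [desc_smeval_neg_half, nsmul_eq_mul] at h
  have hf : (n.factorial : ℝ) ≠ 0 := by exact_mod_cast n.factorial_ne_zero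
  apply mul_left_cancel₀ hf
  rw [← h]; ring

lemma ringChoose_neg_one (n : ℕ) :
    Ring.choose (-1 : ℝ) n = (-1)^n := by
  have h := Ring.descPochhammer_eq_factorial_smul_choose (-1 : ℝ) n
  rw [desc_smeval_neg_one, nsmul_eq_mul] at h
  have hf : (n.factorial : ℝ) ≠ 0 := by exact_mod_cast n.factorial_ne_zero
  apply mul_left_cancel₀ hf
  rw [← h]; ring

lemma centralBinom_conv (n : ℕ) :
    ∑ k ∈ Finset.range (n+1), bb k * bb (n-k) = 1 := by
  have hv := Ring.add_choose_eq n (Commute.all (-(1/2) : ℝ) (-(1/2)))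
  rw [show (-(1/2) : ℝ) + -(1/2) = -1 by norm_num, ringChoose_neg_one,
    Finset.Nat.sum_antidiagonal_eq_sum_range_succ_mk] at hv
  simp only [ringChoose_neg_half] at hv
  have hterm : ∀ k ∈ Finset.range (n+1),
      ((-(1/4):ℝ))^k * (Nat.centralBinom k : ℝ) *
        (((-(1/4):ℝ))^(n-k) * (Nat.centralBinom (n-k) : ℝ))
      = (-(1/4):ℝ)^n * ((Nat.centralBinom k : ℝ) * Nat.centralBinom (n-k)) := by
    intro k hk
    rw [Finset.mem_range, Nat.lt_succ_iff] at hk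
    rw [mul_mul_mul_comm, ← pow_add, Nat.add_sub_cancel' hk]
  rw [Finset.sum_congr rfl hterm, ← Finset.mul_sum] at hv
  have hbterm : ∀ k ∈ Finset.range (n+1),
      bb k * bb (n-k) = (1/4:ℝ)^n * ((Nat.centralBinom k : ℝ) * Nat.centralBinom (n-k)) := by
    intro k hk
    rw [Finset.mem_range, Nat.lt_succ_iff] at hk
    rw [bb, bb, div_mul_div_comm, ← pow_add, Nat.add_sub_cancel' hk, one_div_pow]
    ring
  rw [Finset.sum_congr rfl hbterm, ← Finset.mul_sum]
  have h4 : ((-(1/4):ℝ))^n = (-1)^n * (1/4)^n := by rw [← mul_pow]; norm_num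
  rw [h4, mul_assoc] at hv
  have hne : ((-1:ℝ))^n ≠ 0 := pow_ne_zero _ (by norm_num)
  exact (mul_left_cancel₀ hne (by rw [mul_one]; exact hv)).symm

lemma partial_sum_eq (L : ℕ) :
    ∑ i ∈ Finset.Icc 1 (2 * L), (Nat.choose (i - 1) (i / 2) : ℝ) * (1 / 2 ^ i)
      = (∑ k ∈ Finset.range (L+1), bb k) - 1/2 - bb L / 2 := by
  induction L with
  | zero => simp [bb]; norm_num
  | succ L ih =>
    rw [show 2 * (L+1) = (2*L+1) + 1 by ring, Finset.sum_Icc_succ_top (by omega),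
      Finset.sum_Icc_succ_top (by omega), ih]
    have e1 : (2*L+1) - 1 = 2*L := by omega
    have e2 : (2*L+1) / 2 = L := by omega
    have e3 : (2*L+1+1) - 1 = 2*L+1 := by omega
    have e4 : (2*L+1+1) / 2 = L+1 := by omega
    rw [e1, e2, e3, e4]
    have c1 : ((2*L).choose L : ℝ) = Nat.centralBinom L := by
      rw [Nat.centralBinom_eq_two_mul_choose]
    have c2 : (Nat.centralBinom (L+1) : ℝ) = 2 * (2*L+1).choose (L+1) := by
      have hp : Nat.centralBinom (L+1) = (2*L+1).choose L + (2*L+1).choose (L+1) := by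
        rw [Nat.centralBinom_eq_two_mul_choose, show 2*(L+1) = (2*L+1)+1 by ring]
        exact Nat.choose_succ_succ _ _
      rw [hp, ← Nat.choose_symm_half]
      push_cast
      ring
    have h4 : (4:ℝ)^L ≠ 0 := by positivity
    have p1 : (2:ℝ)^(2*L+1) = 2 * 4^L := by rw [pow_succ, pow_mul]; norm_num [mul_comm]
    have p2 : (2:ℝ)^(2*L+1+1) = 4 * 4^L := by rw [pow_succ, p1]; ring
    have t1 : ((2*L).choose L : ℝ) * (1/2^(2*L+1)) = bb L / 2 := by
      rw [c1, bb, p1]; ring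
    have t2 : ((2*L+1).choose (L+1) : ℝ) * (1/2^(2*L+1+1)) = bb (L+1) / 2 := by
      rw [bb, p2, pow_succ]
      field_simp
      linear_combination (-1:ℝ) * c2
    conv_rhs => rw [Finset.sum_range_succ]
    linarith [t1, t2]

theorem hasSum_first_moment_genFun (y : ℝ) (h0 : 0 ≤ y) (h1 : y < 1) :
    HasSum
      (fun L : ℕ =>
        (∑ i ∈ Finset.Icc 1 (2 * L), (Nat.choose (i - 1) (i / 2) : ℝ) * (1 / 2 ^ i)) * y ^ L)
      ((y + 1) / (2 * (1 - y) ^ ((3 : ℝ) / 2)) - 1 / (2 * (1 - y))) := by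
  have hu0 : (0:ℝ) < 1 - y := by linarith
  set s := Real.sqrt (1 - y) with hs
  have hs0 : 0 < s := Real.sqrt_pos.mpr hu0
  have hs2 : s ^ 2 = 1 - y := Real.sq_sqrt hu0.le
  have hg : Summable (fun k : ℕ => y ^ k) := summable_geometric_of_lt_one h0 h1
  have hgn : Summable (fun k : ℕ => ‖y ^ k‖) := by
    simpa [Real.norm_eq_abs, abs_pow, abs_of_nonneg h0] using hg
  have hfn : Summable (fun k : ℕ => ‖bb k * y ^ k‖) := by
    refine Summable.of_nonneg_of_le (fun k => norm_nonneg _) (fun k => ?_) hg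
    rw [Real.norm_eq_abs, abs_of_nonneg (mul_nonneg (bb_nonneg k) (pow_nonneg h0 k))]
    calc bb k * y ^ k ≤ 1 * y ^ k :=
          mul_le_mul_of_nonneg_right (bb_le_one k) (pow_nonneg h0 k)
    _ = y ^ k := one_mul _
  have hf : Summable (fun k : ℕ => bb k * y ^ k) := hfn.of_norm
  set F := ∑' k : ℕ, bb k * y ^ k with hFdef
  have hFsum : HasSum (fun k : ℕ => bb k * y ^ k) F := hf.hasSum
  -- square of F
  have hFF := hasSum_sum_range_mul_of_summable_norm hfn hfn
  have hsq : ∀ n : ℕ, ∑ k ∈ Finset.range (n+1),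
      (bb k * y ^ k) * (bb (n-k) * y ^ (n-k)) = y ^ n := by
    intro n
    have hterm : ∀ k ∈ Finset.range (n+1),
        (bb k * y ^ k) * (bb (n-k) * y ^ (n-k)) = (bb k * bb (n-k)) * y ^ n := by
      intro k hk
      rw [Finset.mem_range, Nat.lt_succ_iff] at hk
      rw [mul_mul_mul_comm, ← pow_add, Nat.add_sub_cancel' hk]
    rw [Finset.sum_congr rfl hterm, ← Finset.sum_mul, centralBinom_conv, one_mul]
  simp only [hsq] at hFF
  have hF2 : F * F = (1 - y)⁻¹ := hFF.unique (hasSum_geometric_of_lt_one h0 h1)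
  have hF1 : 1 ≤ F := by
    have h := le_hasSum hFsum 0 (fun j _ => mul_nonneg (bb_nonneg j) (pow_nonneg h0 j))
    simpa [bb] using h
  have hF : F = s⁻¹ := by
    have h2 : F ^ 2 = (1 - y)⁻¹ := by rw [sq, hF2]
    have h3 : F = Real.sqrt (F ^ 2) := (Real.sqrt_sq (by linarith)).symm
    rw [h3, h2, Real.sqrt_inv, ← hs]
  -- product with geometric series
  have hA := hasSum_sum_range_mul_of_summable_norm hfn hgn
  rw [tsum_geometric_of_lt_one h0 h1, ← hFdef, hF] at hA
  have hAn : ∀ n : ℕ, ∑ k ∈ Finset.range (n+1), (bb k * y ^ k) * y ^ (n-k)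
      = (∑ k ∈ Finset.range (n+1), bb k) * y ^ n := by
    intro n
    rw [Finset.sum_mul]
    refine Finset.sum_congr rfl fun k hk => ?_
    rw [Finset.mem_range, Nat.lt_succ_iff] at hk
    rw [mul_assoc, ← pow_add, Nat.add_sub_cancel' hk]
  simp only [hAn] at hA
  have H2 : HasSum (fun L : ℕ => (1/2 : ℝ) * y ^ L) ((1/2) * (1 - y)⁻¹) :=
    (hasSum_geometric_of_lt_one h0 h1).mul_left _
  have H3 : HasSum (fun L : ℕ => (1/2 : ℝ) * (bb L * y ^ L)) ((1/2) * s⁻¹) :=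
    (hF ▸ hFsum).mul_left _
  have final := (hA.sub H2).sub H3
  have hval : s⁻¹ * (1 - y)⁻¹ - (1/2) * (1 - y)⁻¹ - (1/2) * s⁻¹
      = (y + 1) / (2 * (1 - y) ^ ((3 : ℝ) / 2)) - 1 / (2 * (1 - y)) := by
    have hr : (1 - y) ^ ((3 : ℝ)/2) = (1 - y) * s := by
      rw [show ((3:ℝ)/2) = 1 + 1/2 by norm_num, Real.rpow_add hu0, Real.rpow_one]
      congr 1
      rw [hs, Real.sqrt_eq_rpow]
    have hy : y = 1 - s ^ 2 := by rw [hs2]; ring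
    rw [hr, ← hs2, hy]
    field_simp
    ring
  rw [← hval]
  convert final using 1
  · rfl
  funext L
  rw [partial_sum_eq]
  ring
end
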